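/- arXiv:1805.03451 — 4 statements merged into one kernel-verified Lean document; each statement's English description precedes it below -/
import Mathlib

section
/- A nonempty affine preimage of a quasi-Frank-and-Wolfe set is a quasi-Frank-and-Wolfe set. -/
open Pointwise

noncomputable section

/-- A quadratic function on a real vector space. -/
def IsQuadratic {E : Type*} [AddCommGroup E] [Module ℝ E] (f : E → ℝ) : Prop :=
  ∃ (B : E →ₗ[ℝ] E →ₗ[ℝ] ℝ) (l : E →ₗ[ℝ] ℝ) (c : ℝ), ∀ x, f x = B x x + l x + c

/-- A quasi-Frank-and-Wolfe set: a convex set on which every quadratic function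
which is quasi-convex on the set and bounded below attains its infimum. -/
def IsQFWSet {E : Type*} [AddCommGroup E] [Module ℝ E] (F : Set E) : Prop :=
  Convex ℝ F ∧ ∀ f : E → ℝ, IsQuadratic f →
    (∀ α : ℝ, Convex ℝ {x ∈ F | f x ≤ α}) → BddBelow (f '' F) →
    ∃ x₀ ∈ F, ∀ x ∈ F, f x₀ ≤ f x

/-! ### Auxiliary lemmas -/

theorem IsQuadratic.comp_affine {V W : Type*} [AddCommGroup V] [Module ℝ V]
    [AddCommGroup W] [Module ℝ W] {f : W → ℝ} (hf : IsQuadratic f) (A : V →ᵃ[ℝ] W) :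
    IsQuadratic (fun x => f (A x)) := by
  obtain ⟨B, l, c, h⟩ := hf
  refine ⟨B.compl₁₂ A.linear A.linear,
    ((B.flip (A 0)).comp A.linear) + ((B (A 0)).comp A.linear) + (l.comp A.linear),
    B (A 0) (A 0) + l (A 0) + c, fun x => ?_⟩
  have hA : A x = A.linear x + A 0 := by
    have h2 := congrFun (AffineMap.decomp A) x
    simpa using h2
  show f (A x) = _
  rw [h (A x), hA]
  simp only [map_add, LinearMap.add_apply, LinearMap.compl₁₂_apply, LinearMap.comp_apply,
    LinearMap.flip_apply]
  ring

theorem IsQuadratic.continuous {V : Type*} [NormedAddCommGroup V] [NormedSpace ℝ V]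
    [FiniteDimensional ℝ V] {f : V → ℝ} (hf : IsQuadratic f) : Continuous f := by
  obtain ⟨B, l, c, h⟩ := hf
  have hfun : f = fun x => B x x + l x + c := funext h
  rw [hfun]
  have h1 : Continuous fun x : V => (LinearMap.toContinuousLinearMap (B x) : V →L[ℝ] ℝ) :=
    ((LinearMap.toContinuousLinearMap (𝕜 := ℝ) (E := V) (F' := ℝ)).toLinearMap.comp
      B).continuous_of_finiteDimensional
  have hB : Continuous fun x : V => B x x := by
    have h2 : Continuous fun x : V =>
        ((LinearMap.toContinuousLinearMap (B x) : V →L[ℝ] ℝ), x) := h1.prodMk continuous_id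
    have h3 := (isBoundedBilinearMap_apply (𝕜 := ℝ) (E := V) (F := ℝ)).continuous.comp h2
    exact h3
  exact (hB.add l.continuous_of_finiteDimensional).add continuous_const

theorem quad_line {V : Type*} [AddCommGroup V] [Module ℝ V]
    (B : V →ₗ[ℝ] V →ₗ[ℝ] ℝ) (l : V →ₗ[ℝ] ℝ) (c : ℝ) {f : V → ℝ}
    (h : ∀ x, f x = B x x + l x + c) (x d : V) (t : ℝ) :
    f (x + t • d) = f x + t * (B x d + B d x + l d) + t ^ 2 * B d d := by
  rw [h, h]
  simp only [map_add, map_smul, LinearMap.add_apply, LinearMap.smul_apply, smul_eq_mul]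
  ring

theorem quad_coeffs {a b m : ℝ} (h1 : ∀ t : ℝ, 0 ≤ t → a * t ^ 2 + b * t ≤ 0)
    (h2 : ∀ t : ℝ, 0 ≤ t → m ≤ a * t ^ 2 + b * t) : a = 0 ∧ b = 0 := by
  have ha : a = 0 := by
    rcases lt_trichotomy a 0 with h | h | h
    · exfalso
      set t := max ((|b| + |m| + 1) / (-a)) 1 with htdef
      have ht1 : (1:ℝ) ≤ t := le_max_right _ _
      have ht0 : (0:ℝ) ≤ t := by linarith
      have htge : (|b| + |m| + 1) / (-a) ≤ t := le_max_left _ _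
      have hna : (0:ℝ) < -a := by linarith
      have hatb : a * t ≤ -(|b| + |m| + 1) := by
        rw [div_le_iff₀ hna] at htge
        nlinarith
      have hfac : a * t + b ≤ -(|m| + 1) := by
        have := le_abs_self b
        linarith
      have hkey := h2 t ht0
      have hexp : a * t ^ 2 + b * t = t * (a * t + b) := by ring
      rw [hexp] at hkey
      have hfac0 : a * t + b ≤ 0 := by
        have := abs_nonneg m; linarith
      have h5 : t * (a * t + b) ≤ 1 * (a * t + b) :=
        mul_le_mul_of_nonpos_right ht1 hfac0
      have := neg_abs_le m
      nlinarith
    · exact h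
    · exfalso
      set t := (|b| + 1) / a with htdef
      have ht0 : (0:ℝ) < t := by positivity
      have hkey := h1 t ht0.le
      have hat : a * t = |b| + 1 := by
        rw [htdef]; field_simp [h.ne']
      have := neg_abs_le b
      nlinarith
  refine ⟨ha, ?_⟩
  rw [ha] at h1 h2
  rcases lt_trichotomy b 0 with h | h | h
  · exfalso
    have hb0 : (0:ℝ) < -b := by linarith
    have hkey := h2 ((|m| + 1) / (-b)) (by positivity)
    have hbt : b * ((|m| + 1) / (-b)) = -(|m| + 1) := by
      rw [div_neg, mul_neg, mul_div_cancel₀ _ h.ne]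
    have := neg_abs_le m
    nlinarith
  · exact h
  · exfalso
    have hkey := h1 1 zero_le_one
    nlinarith

/-- no "f-asymptotes": every nonempty affine subspace disjoint from `C`
is at positive distance from `C`. -/
def NoFAsymp {V : Type*} [NormedAddCommGroup V] [NormedSpace ℝ V] (C : Set V) : Prop :=
  ∀ M : AffineSubspace ℝ V, (M : Set V).Nonempty → (∀ x ∈ C, x ∉ M) →
    ∃ ε > 0, ∀ x ∈ C, ε ≤ Metric.infDist x (M : Set V)

theorem NoFAsymp.isClosed {V : Type*} [NormedAddCommGroup V] [NormedSpace ℝ V] {C : Set V}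
    (h : NoFAsymp C) : IsClosed C := by
  refine isClosed_of_closure_subset fun z hz => ?_
  by_contra hzC
  have hdisj : ∀ x ∈ C, x ∉ AffineSubspace.mk' z (⊥ : Submodule ℝ V) := by
    intro x hx hmem
    rw [AffineSubspace.mem_mk', Submodule.mem_bot, vsub_eq_sub, sub_eq_zero] at hmem
    exact hzC (hmem ▸ hx)
  obtain ⟨ε, hε, hb⟩ := h (AffineSubspace.mk' z (⊥ : Submodule ℝ V))
    ⟨z, AffineSubspace.self_mem_mk' _ _⟩ hdisj
  obtain ⟨x, hxC, hxz⟩ := Metric.mem_closure_iff.mp hz ε hε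
  have h1 : Metric.infDist x (AffineSubspace.mk' z (⊥ : Submodule ℝ V) : Set V) ≤ dist x z :=
    Metric.infDist_le_dist_of_mem (AffineSubspace.self_mem_mk' _ _)
  have h2 := hb x hxC
  rw [dist_comm] at hxz
  linarith

theorem ray_mem {V : Type*} [NormedAddCommGroup V] [NormedSpace ℝ V] {C : Set V}
    (hC : Convex ℝ C) (hcl : IsClosed C) {x₀ d : V} (hx₀ : x₀ ∈ C)
    (hray : ∀ t : ℝ, 0 ≤ t → x₀ + t • d ∈ C) :
    ∀ x ∈ C, ∀ t : ℝ, 0 ≤ t → x + t • d ∈ C := by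
  intro x hx t ht
  have key : ∀ j : ℕ, x + t • d + (1 / ((j:ℝ) + 1)) • (x₀ - x) ∈ C := by
    intro j
    have hj0 : (0:ℝ) < (j:ℝ) + 1 := by positivity
    have hlam : (0:ℝ) < 1 / ((j:ℝ) + 1) := by positivity
    have hlam1 : (1 / ((j:ℝ) + 1)) ≤ 1 := by
      rw [div_le_one hj0]
      linarith [Nat.cast_nonneg (α := ℝ) j]
    have hpt : x₀ + (((j:ℝ) + 1) * t) • d ∈ C := hray _ (by positivity)
    have hcomb := hC hx hpt (a := 1 - 1 / ((j:ℝ) + 1)) (b := 1 / ((j:ℝ) + 1))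
      (by linarith) hlam.le (by ring)
    have hmul : (1 / ((j:ℝ) + 1)) * (((j:ℝ) + 1) * t) = t := by
      field_simp
    have heq : (1 - 1 / ((j:ℝ) + 1)) • x + (1 / ((j:ℝ) + 1)) • (x₀ + (((j:ℝ) + 1) * t) • d)
        = x + t • d + (1 / ((j:ℝ) + 1)) • (x₀ - x) := by
      rw [smul_add, smul_smul, hmul, sub_smul, one_smul, smul_sub]
      abel
    rwa [heq] at hcomb
  have h0 : Filter.Tendsto (fun j : ℕ => (1 / ((j:ℝ) + 1))) Filter.atTop (nhds 0) :=
    tendsto_one_div_add_atTop_nhds_zero_nat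
  have h1 : Filter.Tendsto (fun j : ℕ => x + t • d + (1 / ((j:ℝ) + 1)) • (x₀ - x))
      Filter.atTop (nhds (x + t • d)) := by
    have h2 := (h0.smul_const (x₀ - x)).const_add (x + t • d)
    simpa using h2
  exact hcl.mem_of_tendsto h1 (Filter.Eventually.of_forall key)

theorem exists_rec {V : Type*} [NormedAddCommGroup V] [InnerProductSpace ℝ V]
    [FiniteDimensional ℝ V] {C : Set V} (hC : Convex ℝ C) (hcl : IsClosed C) (hne : C.Nonempty)
    (hub : ¬Bornology.IsBounded C) :
    ∃ d : V, ‖d‖ = 1 ∧ ∀ x ∈ C, ∀ t : ℝ, 0 ≤ t → x + t • d ∈ C := by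
  obtain ⟨x₀, hx₀⟩ := hne
  have hseq : ∀ k : ℕ, ∃ x, x ∈ C ∧ (k:ℝ) + ‖x₀‖ < ‖x‖ := by
    intro k
    by_contra h
    push_neg at h
    exact hub (isBounded_iff_forall_norm_le.mpr ⟨(k:ℝ) + ‖x₀‖, fun x hx => (h x hx)⟩)
  choose xs hxsC hxs using hseq
  have hnorm : ∀ k : ℕ, (k:ℝ) < ‖xs k - x₀‖ := by
    intro k
    have := norm_sub_norm_le (xs k) x₀
    linarith [hxs k]
  have hpos : ∀ k : ℕ, (0:ℝ) < ‖xs k - x₀‖ := fun k =>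
    lt_of_le_of_lt (Nat.cast_nonneg k) (hnorm k)
  set u : ℕ → V := fun k => ‖xs k - x₀‖⁻¹ • (xs k - x₀) with hu
  have humem : ∀ k, u k ∈ Metric.sphere (0:V) 1 := by
    intro k
    rw [mem_sphere_zero_iff_norm, hu]
    simp only [norm_smul, norm_inv, norm_norm]
    exact inv_mul_cancel₀ (ne_of_gt (hpos k))
  obtain ⟨d, hdmem, ψ, hψ, hψt⟩ := (isCompact_sphere (0:V) 1).tendsto_subseq humem
  refine ⟨d, mem_sphere_zero_iff_norm.mp hdmem, ?_⟩
  have hray : ∀ t : ℝ, 0 ≤ t → x₀ + t • d ∈ C := by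
    intro t ht
    have hmem : ∀ᶠ j in Filter.atTop, x₀ + t • u (ψ j) ∈ C := by
      filter_upwards [Filter.eventually_ge_atTop ⌈t⌉₊] with j hj
      have hRt : t ≤ ‖xs (ψ j) - x₀‖ := by
        calc t ≤ (⌈t⌉₊ : ℝ) := Nat.le_ceil t
        _ ≤ (j : ℝ) := Nat.cast_le.mpr hj
        _ ≤ (ψ j : ℝ) := Nat.cast_le.mpr hψ.le_apply
        _ ≤ ‖xs (ψ j) - x₀‖ := (hnorm (ψ j)).le
      have hR0 : 0 < ‖xs (ψ j) - x₀‖ := hpos (ψ j)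
      have heq : x₀ + t • u (ψ j)
          = (1 - t / ‖xs (ψ j) - x₀‖) • x₀ + (t / ‖xs (ψ j) - x₀‖) • xs (ψ j) := by
        rw [hu]
        simp only [smul_smul, sub_smul, one_smul, smul_sub, div_eq_mul_inv]
        abel
      rw [heq]
      have hd1 : t / ‖xs (ψ j) - x₀‖ ≤ 1 := (div_le_one hR0).mpr hRt
      refine hC hx₀ (hxsC (ψ j)) (by linarith) (by positivity) (by ring)
    have htend : Filter.Tendsto (fun j => x₀ + t • u (ψ j)) Filter.atTop (nhds (x₀ + t • d)) :=
      Filter.Tendsto.const_add x₀ (hψt.const_smul t)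
    exact hcl.mem_of_tendsto htend hmem
  exact ray_mem hC hcl hx₀ hray

theorem IsQFWSet.noFAsymp {V : Type*} [NormedAddCommGroup V] [InnerProductSpace ℝ V]
    [FiniteDimensional ℝ V] {F : Set V} (hF : IsQFWSet F) : NoFAsymp F := by
  intro M hMne hdisj
  by_contra hcon
  push_neg at hcon
  haveI : Nonempty M := hMne.to_subtype
  set Q : V →ᵃ[ℝ] V := (AffineSubspace.subtype M).comp (EuclideanGeometry.orthogonalProjection M)
    with hQdef
  have hQmem : ∀ y, Q y ∈ M := fun y => (EuclideanGeometry.orthogonalProjection M y).2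
  have hQself : ∀ y ∈ M, Q y = y := fun y hy =>
    EuclideanGeometry.orthogonalProjection_eq_self_iff.mpr hy
  have hQle : ∀ (y : V), ∀ p ∈ M, ‖y - Q y‖ ≤ dist y p := by
    intro y p hp
    have h1 : y - Q y ∈ M.directionᗮ := by
      have := EuclideanGeometry.vsub_orthogonalProjection_mem_direction_orthogonal M y
      exact this
    have h2 : Q y - p ∈ M.direction := by
      have := AffineSubspace.vsub_mem_direction (hQmem y) hp
      simpa [vsub_eq_sub] using this
    have hinner : inner ℝ (y - Q y) (Q y - p) = (0:ℝ) :=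
      Submodule.inner_left_of_mem_orthogonal h2 h1
    have h3 : dist y p ^ 2 = ‖y - Q y‖ ^ 2 + ‖Q y - p‖ ^ 2 := by
      rw [dist_eq_norm]
      have heq : y - p = (y - Q y) + (Q y - p) := by abel
      rw [heq, norm_add_sq_real, hinner]
      ring
    nlinarith [norm_nonneg (y - Q y), dist_nonneg (x := y) (y := p), norm_nonneg (Q y - p)]
  set R : V →ᵃ[ℝ] V :=
    { toFun := fun y => y - Q y
      linear := LinearMap.id - Q.linear
      map_vadd' := by
        intro p v
        have hQv := Q.map_vadd p v
        simp only [vadd_eq_add] at hQv ⊢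
        rw [hQv]
        simp only [LinearMap.sub_apply, LinearMap.id_apply]
        abel } with hRdef
  have hR : ∀ y, R y = y - Q y := fun y => rfl
  set g : V → ℝ := fun y => ‖y - Q y‖ ^ 2 with hg
  have hgq : IsQuadratic g := by
    have hq0 : IsQuadratic (fun z : V => ‖z‖ ^ 2) :=
      ⟨innerₗ V, 0, 0, by
        intro z
        simp [real_inner_self_eq_norm_sq]⟩
    have := hq0.comp_affine R
    exact this
  have hgconv : ∀ α : ℝ, Convex ℝ {y ∈ F | g y ≤ α} := by
    intro α
    rcases le_or_gt 0 α with hα | hα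
    · have hset : {y ∈ F | g y ≤ α} = F ∩ R ⁻¹' Metric.closedBall 0 (Real.sqrt α) := by
        ext y
        simp only [Set.mem_setOf_eq, Set.mem_inter_iff, Set.mem_preimage,
          Metric.mem_closedBall, dist_zero_right, hR]
        constructor
        · rintro ⟨hyF, hyg⟩
          exact ⟨hyF, (Real.le_sqrt (norm_nonneg _) hα).mpr hyg⟩
        · rintro ⟨hyF, hyle⟩
          exact ⟨hyF, (Real.le_sqrt (norm_nonneg _) hα).mp hyle⟩
      rw [hset]
      exact hF.1.inter ((convex_closedBall _ _).affine_preimage R)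
    · have hset : {y ∈ F | g y ≤ α} = ∅ := by
        ext y
        simp only [Set.mem_setOf_eq, Set.mem_empty_iff_false, iff_false, not_and, not_le]
        intro _
        have : (0:ℝ) ≤ g y := by positivity
        linarith
      rw [hset]
      exact convex_empty
  have hgbdd : BddBelow (g '' F) := by
    refine ⟨0, ?_⟩
    rintro y ⟨x, _, rfl⟩
    positivity
  obtain ⟨y₀, hy₀F, hy₀min⟩ := hF.2 g hgq hgconv hgbdd
  have hy₀0 : g y₀ ≤ 0 := by
    by_contra hposc
    push_neg at hposc
    obtain ⟨y, hyF, hylt⟩ := hcon (Real.sqrt (g y₀)) (Real.sqrt_pos.mpr hposc)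
    obtain ⟨p, hpM, hdlt⟩ := (Metric.infDist_lt_iff hMne).mp hylt
    have h1 : g y ≤ dist y p ^ 2 := by
      have h := hQle y p hpM
      have hgy : g y = ‖y - Q y‖ ^ 2 := rfl
      nlinarith [norm_nonneg (y - Q y), dist_nonneg (x := y) (y := p)]
    have h2 : dist y p ^ 2 < g y₀ := by
      have hsq := Real.sq_sqrt hposc.le
      nlinarith [dist_nonneg (x := y) (y := p), Real.sqrt_nonneg (g y₀)]
    have := hy₀min y hyF
    linarith
  have hz : y₀ - Q y₀ = 0 := by
    have hn : ‖y₀ - Q y₀‖ ^ 2 ≤ 0 := hy₀0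
    have : ‖y₀ - Q y₀‖ = 0 := by nlinarith [norm_nonneg (y₀ - Q y₀)]
    exact norm_eq_zero.mp this
  rw [sub_eq_zero] at hz
  exact hdisj y₀ hy₀F (hz ▸ hQmem y₀)

theorem NoFAsymp.affine_preimage {V W : Type*} [NormedAddCommGroup V] [InnerProductSpace ℝ V]
    [FiniteDimensional ℝ V] [NormedAddCommGroup W] [InnerProductSpace ℝ W]
    [FiniteDimensional ℝ W] {F : Set W} (hF : NoFAsymp F) (T : V →ᵃ[ℝ] W) :
    NoFAsymp (T ⁻¹' F) := by
  intro M hMne hdisj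
  set L := LinearMap.toContinuousLinearMap T.linear with hL
  have hM'ne : ((AffineSubspace.map T M : AffineSubspace ℝ W) : Set W).Nonempty := by
    obtain ⟨p, hp⟩ := hMne
    exact ⟨T p, AffineSubspace.mem_map.mpr ⟨p, hp, rfl⟩⟩
  have hM'disj : ∀ y ∈ F, y ∉ (AffineSubspace.map T M : AffineSubspace ℝ W) := by
    intro y hyF hy
    obtain ⟨p, hpM, rfl⟩ := AffineSubspace.mem_map.mp hy
    exact hdisj p (Set.mem_preimage.mpr hyF) hpM
  obtain ⟨ε, hε, hb⟩ := hF (AffineSubspace.map T M) hM'ne hM'disj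
  refine ⟨ε / (‖L‖ + 1), by positivity, ?_⟩
  intro x hx
  by_contra hltc
  push_neg at hltc
  obtain ⟨p, hpM, hdlt⟩ := (Metric.infDist_lt_iff hMne).mp hltc
  have h1 : ε ≤ dist (T x) (T p) := by
    refine le_trans (hb (T x) hx) ?_
    exact Metric.infDist_le_dist_of_mem (AffineSubspace.mem_map.mpr ⟨p, hpM, rfl⟩)
  have h2 : dist (T x) (T p) ≤ ‖L‖ * dist x p := by
    rw [dist_eq_norm, dist_eq_norm]
    have heq : T x - T p = T.linear (x - p) := by
      have := AffineMap.linearMap_vsub T x p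
      simpa [vsub_eq_sub] using this.symm
    rw [heq]
    have hcoe : T.linear (x - p) = L (x - p) := by
      simp [hL]
    rw [hcoe]
    exact L.le_opNorm _
  have h3 : (0:ℝ) ≤ ‖L‖ := norm_nonneg _
  have h4 : (0:ℝ) ≤ dist x p := dist_nonneg
  have h5 : dist x p * (‖L‖ + 1) < ε := (lt_div_iff₀ (by positivity)).mp hdlt
  nlinarith

theorem qfw_main (n : ℕ) : ∀ (V : Type) [NormedAddCommGroup V] [InnerProductSpace ℝ V]
    [FiniteDimensional ℝ V], Module.finrank ℝ V ≤ n → ∀ C : Set V, C.Nonempty → Convex ℝ C →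
    NoFAsymp C → ∀ f : V → ℝ, IsQuadratic f →
    (∀ α : ℝ, Convex ℝ {x ∈ C | f x ≤ α}) → BddBelow (f '' C) →
    ∃ x₀ ∈ C, ∀ x ∈ C, f x₀ ≤ f x := by
  induction n with
  | zero =>
    intro V _ _ _ hrk C hne _ _ f _ _ _
    obtain ⟨x₀, hx₀⟩ := hne
    haveI : Subsingleton V := Module.finrank_zero_iff.mp (Nat.le_zero.mp hrk)
    exact ⟨x₀, hx₀, fun x hx => by rw [Subsingleton.elim x x₀]⟩
  | succ n IH =>
    intro V _ _ _ hrk C hne hCconv hCasym f hfq hconv hbdd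
    by_contra hmin
    push_neg at hmin
    have hCcl : IsClosed C := hCasym.isClosed
    have hfc : Continuous f := hfq.continuous
    set μ := sInf (f '' C) with hμ
    have hμle : ∀ x ∈ C, μ ≤ f x := fun x hx => csInf_le hbdd ⟨x, hx, rfl⟩
    have hμlt : ∀ x ∈ C, μ < f x := by
      intro x hx
      rcases lt_or_eq_of_le (hμle x hx) with h | h
      · exact h
      · obtain ⟨y, hy, hylt⟩ := hmin x hx
        have := hμle y hy
        linarith [h.le, h.ge]
    set Ck : ℕ → Set V := fun k => {x ∈ C | f x ≤ μ + 1 / ((k:ℝ) + 1)} with hCk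
    have hCkcl : ∀ k, IsClosed (Ck k) := by
      intro k
      have heq : Ck k = C ∩ f ⁻¹' Set.Iic (μ + 1 / ((k:ℝ) + 1)) := rfl
      rw [heq]
      exact hCcl.inter (isClosed_Iic.preimage hfc)
    have hCkne : ∀ k, (Ck k).Nonempty := by
      intro k
      have h0 : (0:ℝ) < 1 / ((k:ℝ) + 1) := by positivity
      obtain ⟨y, hy, hylt⟩ := exists_lt_of_csInf_lt (hne.image f) (by linarith : μ < μ + 1 / ((k:ℝ) + 1))
      obtain ⟨x, hxC, rfl⟩ := hy
      exact ⟨x, hxC, hylt.le⟩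
    have hCkconv : ∀ k, Convex ℝ (Ck k) := fun k => hconv _
    by_cases hbded : ∃ k, Bornology.IsBounded (Ck k)
    · obtain ⟨k, hk⟩ := hbded
      have hcp : IsCompact (Ck k) := Metric.isCompact_of_isClosed_isBounded (hCkcl k) hk
      obtain ⟨x₀, hx₀, hx₀min⟩ := hcp.exists_isMinOn (hCkne k) hfc.continuousOn
      rw [isMinOn_iff] at hx₀min
      obtain ⟨y, hyC, hylt⟩ := hmin x₀ hx₀.1
      rcases le_or_gt (f y) (μ + 1 / ((k:ℝ) + 1)) with h | h
      · exact absurd (hx₀min y ⟨hyC, h⟩) (not_le.mpr hylt)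
      · have := hx₀.2
        linarith
    · push_neg at hbded
      set S : ℕ → Set V := fun k => {d | d ∈ Metric.sphere (0:V) 1 ∧
        ∀ x ∈ Ck k, ∀ t : ℝ, 0 ≤ t → x + t • d ∈ Ck k} with hS
      have hSne : ∀ k, (S k).Nonempty := by
        intro k
        obtain ⟨d, hd1, hdray⟩ := exists_rec (hCkconv k) (hCkcl k) (hCkne k) (hbded k)
        exact ⟨d, mem_sphere_zero_iff_norm.mpr hd1, hdray⟩
      have hScl : ∀ k, IsClosed (S k) := by
        intro k
        have heq : S k = Metric.sphere (0:V) 1 ∩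
            ⋂ x ∈ Ck k, ⋂ t ∈ Set.Ici (0:ℝ), (fun d => x + t • d) ⁻¹' (Ck k) := by
          ext d
          simp only [hS, Set.mem_setOf_eq, Set.mem_inter_iff, Set.mem_iInter, Set.mem_preimage,
            Set.mem_Ici]
        rw [heq]
        refine Metric.isClosed_sphere.inter ?_
        refine isClosed_biInter fun x hx => isClosed_biInter fun t ht => ?_
        exact (hCkcl k).preimage (continuous_const.add (continuous_id.const_smul t))
      have hSsub : ∀ k, S (k+1) ⊆ S k := by
        intro k d hd
        refine ⟨hd.1, ?_⟩
        have hsub : Ck (k+1) ⊆ Ck k := by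
          intro y hy
          refine ⟨hy.1, le_trans hy.2 ?_⟩
          have h1 : (1:ℝ) / ((k:ℝ) + 1 + 1) ≤ 1 / ((k:ℝ) + 1) := by
            apply one_div_le_one_div_of_le
            · positivity
            · linarith
          push_cast
          linarith
        obtain ⟨x₁, hx₁⟩ := hCkne (k+1)
        have hray1 : ∀ t : ℝ, 0 ≤ t → x₁ + t • d ∈ Ck k :=
          fun t ht => hsub (hd.2 x₁ hx₁ t ht)
        exact ray_mem (hCkconv k) (hCkcl k) (hsub hx₁) hray1
      have hScompact : IsCompact (S 0) :=
        Metric.isCompact_of_isClosed_isBounded (hScl 0)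
          (Metric.isBounded_sphere.subset fun d hd => hd.1)
      obtain ⟨d, hd⟩ := IsCompact.nonempty_iInter_of_sequence_nonempty_isCompact_isClosed
        S hSsub hSne hScompact hScl
      have hdS : ∀ k, d ∈ S k := by
        intro k
        exact Set.mem_iInter.mp hd k
      have hdnorm : ‖d‖ = 1 := mem_sphere_zero_iff_norm.mp (hdS 0).1
      have hdray : ∀ x ∈ C, ∀ t : ℝ, 0 ≤ t → x + t • d ∈ C ∧ f (x + t • d) ≤ f x := by
        intro x hx
        have hβ : μ < f x := hμlt x hx
        obtain ⟨k, hk⟩ := exists_nat_one_div_lt (show (0:ℝ) < f x - μ by linarith)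
        have hsub : Ck k ⊆ {y ∈ C | f y ≤ f x} := by
          intro y hy
          exact ⟨hy.1, by linarith [hy.2]⟩
        have hDcl : IsClosed {y ∈ C | f y ≤ f x} := by
          have heq : {y ∈ C | f y ≤ f x} = C ∩ f ⁻¹' Set.Iic (f x) := rfl
          rw [heq]
          exact hCcl.inter (isClosed_Iic.preimage hfc)
        obtain ⟨x₁, hx₁⟩ := hCkne k
        have hray1 : ∀ t : ℝ, 0 ≤ t → x₁ + t • d ∈ {y ∈ C | f y ≤ f x} :=
          fun t ht => hsub ((hdS k).2 x₁ hx₁ t ht)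
        intro t ht
        have hmem := ray_mem (hconv (f x)) hDcl (hsub hx₁) hray1 x ⟨hx, le_refl _⟩ t ht
        exact ⟨hmem.1, hmem.2⟩
      obtain ⟨B, l, c, hq⟩ := hfq
      have hfq' : IsQuadratic f := ⟨B, l, c, hq⟩
      have hcoef : ∀ x ∈ C, B d d = 0 ∧ B x d + B d x + l d = 0 := by
        intro x hx
        apply quad_coeffs (m := μ - f x)
        · intro t ht
          have h1 := (hdray x hx t ht).2
          rw [quad_line B l c hq x d t] at h1
          linarith
        · intro t ht
          have h2 := hμle _ (hdray x hx t ht).1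
          rw [quad_line B l c hq x d t] at h2
          linarith
      obtain ⟨x₀, hx₀⟩ := hne
      have ha : B d d = 0 := (hcoef x₀ hx₀).1
      set A := affineSpan ℝ C with hA
      haveI : Nonempty A := ⟨⟨x₀, subset_affineSpan ℝ C hx₀⟩⟩
      set P : V →ᵃ[ℝ] V := (AffineSubspace.subtype A).comp
        (EuclideanGeometry.orthogonalProjection A) with hP
      have hPmem : ∀ x, P x ∈ A := fun x => (EuclideanGeometry.orthogonalProjection A x).2
      have hPid : ∀ y ∈ A, P y = y := fun y hy =>
        EuclideanGeometry.orthogonalProjection_eq_self_iff.mpr hy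
      have hPlin : P.linear d = d := by
        have h1 : P (d +ᵥ x₀) = P.linear d +ᵥ P x₀ := P.map_vadd x₀ d
        have hx₀d : x₀ + (1:ℝ) • d ∈ C := (hdray x₀ hx₀ 1 zero_le_one).1
        rw [one_smul] at hx₀d
        have e1 : P (x₀ + d) = x₀ + d := hPid _ (subset_affineSpan ℝ C hx₀d)
        have e2 : P x₀ = x₀ := hPid _ (subset_affineSpan ℝ C hx₀)
        simp only [vadd_eq_add] at h1
        rw [add_comm d x₀] at h1
        rw [e1, e2] at h1
        have := h1.symm
        rw [add_comm (P.linear d) x₀] at this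
        exact (add_left_cancel this)
      have hφA : ∀ y ∈ A, B y d + B d y + l d = 0 := by
        set φa : V →ᵃ[ℝ] ℝ :=
          { toFun := fun y => B y d + B d y + l d
            linear := B.flip d + B d
            map_vadd' := by
              intro p v
              simp only [vadd_eq_add, map_add, LinearMap.add_apply, LinearMap.flip_apply]
              ring } with hφa
        have hle : A ≤ AffineSubspace.comap φa (AffineSubspace.mk' (0:ℝ) (⊥ : Submodule ℝ ℝ)) := by
          rw [hA, affineSpan_le]
          intro x hx
          have hv := (hcoef x hx).2
          show φa x ∈ AffineSubspace.mk' (0:ℝ) (⊥ : Submodule ℝ ℝ)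
          rw [AffineSubspace.mem_mk', Submodule.mem_bot, vsub_eq_sub, sub_zero]
          exact hv
        intro y hy
        have hmem : φa y ∈ AffineSubspace.mk' (0:ℝ) (⊥ : Submodule ℝ ℝ) := hle hy
        rw [AffineSubspace.mem_mk', Submodule.mem_bot, vsub_eq_sub,
          sub_zero] at hmem
        exact hmem
      have hinv : ∀ (x : V) (t : ℝ), f (P (x + t • d)) = f (P x) := by
        intro x t
        have h1 : P (x + t • d) = P x + t • d := by
          have h2 : P (t • d +ᵥ x) = P.linear (t • d) +ᵥ P x := P.map_vadd x (t • d)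
          simp only [vadd_eq_add, map_smul, hPlin] at h2
          rw [add_comm (t • d) x] at h2
          rw [h2, add_comm]
        rw [h1, quad_line B l c hq (P x) d t, hφA _ (hPmem x), ha]
        ring
      set ft : V → ℝ := fun x => f (P x) with hft
      have hftC : ∀ x ∈ C, ft x = f x := fun x hx =>
        congrArg f (hPid x (subset_affineSpan ℝ C hx))
      have hdne : d ≠ 0 := by
        intro h
        rw [h, norm_zero] at hdnorm
        exact one_ne_zero hdnorm.symm
      set W := (Submodule.span ℝ {d})ᗮ with hW
      set π := W.orthogonalProjectionOnto with hπ
      have hdec : ∀ x : V, ∃ s : ℝ, x = (π x : V) + s • d := by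
        intro x
        have h1 : x - π x ∈ Wᗮ := W.sub_starProjection_mem_orthogonal x
        have horth : Wᗮ = Submodule.span ℝ {d} := by
          rw [hW]
          exact Submodule.orthogonal_orthogonal _
        rw [horth] at h1
        obtain ⟨s, hs⟩ := Submodule.mem_span_singleton.mp h1
        exact ⟨s, by rw [hs]; abel⟩
      set f' : W → ℝ := fun z => ft (z : V) with hf'
      have hfact : ∀ x : V, ft x = f' (π x) := by
        intro x
        obtain ⟨s, hs⟩ := hdec x
        calc ft x = ft ((π x : V) + s • d) := by rw [← hs]
        _ = ft (π x : V) := hinv _ s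
        _ = f' (π x) := rfl
      set C' : Set W := (fun x => π x) '' C with hC'
      have hrkW : Module.finrank ℝ W ≤ n := by
        have h1 := Submodule.finrank_add_finrank_orthogonal (K := Submodule.span ℝ {d}) (E := V)
        rw [finrank_span_singleton hdne] at h1
        have h2 : Module.finrank ℝ W = Module.finrank ℝ (Submodule.span ℝ {d})ᗮ := rfl
        omega
      have hC'ne : C'.Nonempty := ⟨π x₀, x₀, hx₀, rfl⟩
      have hC'conv : Convex ℝ C' := by
        have h1 := hCconv.linear_image (π : V →ₗ[ℝ] W)
        simpa using h1
      have hC'asym : NoFAsymp C' := by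
        intro M' hM'ne hdisj
        by_contra hcon
        push_neg at hcon
        set Mb := AffineSubspace.comap ((π : V →ₗ[ℝ] W).toAffineMap) M' with hMb
        have hMbne : (Mb : Set V).Nonempty := by
          obtain ⟨m, hm⟩ := hM'ne
          refine ⟨(m : V), ?_⟩
          show ((π : V →ₗ[ℝ] W).toAffineMap (m : V)) ∈ M'
          have hπm : π (m : V) = m := Submodule.orthogonalProjectionOnto_mem_subspace_eq_self m
          simpa [hπm] using hm
        have hMbdisj : ∀ x ∈ C, x ∉ Mb := by
          intro x hx hmem
          exact hdisj (π x) ⟨x, hx, rfl⟩ hmem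
        obtain ⟨ε, hε, hb⟩ := hCasym Mb hMbne hMbdisj
        obtain ⟨z, hzC', hzlt⟩ := hcon ε hε
        obtain ⟨mm, hmm, hdistlt⟩ := (Metric.infDist_lt_iff hM'ne).mp hzlt
        obtain ⟨x, hxC, hxz⟩ := hzC'
        obtain ⟨s, hs⟩ := hdec x
        have hπd : π d = 0 :=
          Submodule.orthogonalProjectionOnto_apply_of_mem_orthogonal
            (Submodule.le_orthogonal_orthogonal _ (Submodule.mem_span_singleton_self d))
        have hpmem : ((mm : V) + s • d) ∈ Mb := by
          show ((π : V →ₗ[ℝ] W).toAffineMap ((mm : V) + s • d)) ∈ M'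
          have hπm : π (mm : V) = mm := Submodule.orthogonalProjectionOnto_mem_subspace_eq_self mm
          have heval : ((π : V →ₗ[ℝ] W).toAffineMap ((mm : V) + s • d)) = mm := by
            show π ((mm : V) + s • d) = mm
            rw [map_add, map_smul, hπm, hπd, smul_zero, add_zero]
          rw [heval]
          exact hmm
        have hdist : dist x ((mm : V) + s • d) = dist z mm := by
          rw [dist_eq_norm, dist_eq_norm]
          have heq : x - ((mm : V) + s • d) = ((π x : V) - (mm : V)) := by
            conv_lhs => rw [hs]
            abel
          rw [heq, ← hxz]
          rw [← AddSubgroupClass.coe_sub]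
          rfl
        have hble := hb x hxC
        have hid : Metric.infDist x (Mb : Set V) ≤ dist x ((mm : V) + s • d) :=
          Metric.infDist_le_dist_of_mem hpmem
        rw [hdist] at hid
        linarith
      have hf'q : IsQuadratic f' := by
        have h1 : IsQuadratic ft := hfq'.comp_affine P
        have h2 := h1.comp_affine (W.subtype.toAffineMap)
        have heq : f' = fun z => ft (W.subtype.toAffineMap z) := rfl
        rw [heq]
        exact h2
      have hkey : ∀ x ∈ C, f' (π x) = f x := by
        intro x hx
        rw [← hfact x, hftC x hx]
      have hconv' : ∀ α : ℝ, Convex ℝ {z ∈ C' | f' z ≤ α} := by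
        intro α
        have himg : {z ∈ C' | f' z ≤ α} = (fun x => π x) '' {x ∈ C | f x ≤ α} := by
          ext z
          constructor
          · rintro ⟨⟨x, hxC, rfl⟩, hz⟩
            exact ⟨x, ⟨hxC, by rw [← hkey x hxC]; exact hz⟩, rfl⟩
          · rintro ⟨x, ⟨hxC, hfx⟩, rfl⟩
            exact ⟨⟨x, hxC, rfl⟩, by rw [hkey x hxC]; exact hfx⟩
        rw [himg]
        have h1 := (hconv α).linear_image (π : V →ₗ[ℝ] W)
        simpa using h1
      have hbdd' : BddBelow (f' '' C') := by
        obtain ⟨b, hb⟩ := hbdd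
        refine ⟨b, ?_⟩
        rintro y ⟨z, ⟨x, hxC, rfl⟩, rfl⟩
        rw [hkey x hxC]
        exact hb ⟨x, hxC, rfl⟩
      obtain ⟨z₀, hz₀C', hz₀min⟩ := IH W hrkW C' hC'ne hC'conv hC'asym f' hf'q hconv' hbdd'
      obtain ⟨x₀', hx₀'C, hx₀'z⟩ := hz₀C'
      obtain ⟨y, hyC, hylt⟩ := hmin x₀' hx₀'C
      have hπx : π x₀' = z₀ := hx₀'z
      have hle : f x₀' ≤ f y := by
        calc f x₀' = f' (π x₀') := (hkey x₀' hx₀'C).symm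
        _ = f' z₀ := by rw [hπx]
        _ ≤ f' (π y) := hz₀min (π y) ⟨y, hyC, rfl⟩
        _ = f y := hkey y hyC
      linarith

theorem qFW_affine_preimage {n m : ℕ}
    (T : EuclideanSpace ℝ (Fin n) →ᵃ[ℝ] EuclideanSpace ℝ (Fin m))
    (F : Set (EuclideanSpace ℝ (Fin m))) (hF : IsQFWSet F)
    (hne : (T ⁻¹' F).Nonempty) :
    IsQFWSet (T ⁻¹' F) := by
  have hC : Convex ℝ (T ⁻¹' F) := hF.1.affine_preimage T
  refine ⟨hC, ?_⟩
  intro f hfq hconv hbdd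
  exact qfw_main (Module.finrank ℝ (EuclideanSpace ℝ (Fin n))) (EuclideanSpace ℝ (Fin n))
    le_rfl (T ⁻¹' F) hne hC (hF.noFAsymp.affine_preimage T) f hfq hconv hbdd
end
end

section
/- For a closed convex set F and a linear subspace L, the following are equivalent: (1) no translate of L is an f-asymptote of F; (2) the orthogonal projection of F onto L^⊥ is closed; (3) F + L is closed. -/
open Pointwise

noncomputable section

/-- An affine subspace `M` is an f-asymptote of `F` if it is nonempty, disjoint
from `F`, and at zero distance from `F`. -/
def IsFAsymptote {E : Type*} [NormedAddCommGroup E] [NormedSpace ℝ E]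
    (M : AffineSubspace ℝ E) (F : Set E) : Prop :=
  (M : Set E).Nonempty ∧ F ∩ (M : Set E) = ∅ ∧
    ∀ ε : ℝ, 0 < ε → ∃ x ∈ F, ∃ y ∈ (M : Set E), dist x y < ε

theorem no_translate_asymptote_iff_proj_closed_iff_sum_closed {n : ℕ}
    (F : Set (EuclideanSpace ℝ (Fin n))) (hcl : IsClosed F) (hconv : Convex ℝ F)
    (L : Submodule ℝ (EuclideanSpace ℝ (Fin n))) :
    ((∀ v : EuclideanSpace ℝ (Fin n), ¬ IsFAsymptote (AffineSubspace.mk' v L) F) ↔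
      IsClosed ((fun x => (Submodule.orthogonalProjection Lᗮ x : EuclideanSpace ℝ (Fin n))) '' F)) ∧
    (IsClosed ((fun x => (Submodule.orthogonalProjection Lᗮ x : EuclideanSpace ℝ (Fin n))) '' F) ↔
      IsClosed (F + (L : Set (EuclideanSpace ℝ (Fin n))))) := by
  set π : EuclideanSpace ℝ (Fin n) → EuclideanSpace ℝ (Fin n) :=
    fun x => (Submodule.orthogonalProjection Lᗮ x : EuclideanSpace ℝ (Fin n)) with hπ
  -- basic facts about π
  have hsub : ∀ x, x - π x ∈ L := by
    intro x
    have h := Submodule.sub_starProjection_mem_orthogonal (K := Lᗮ) x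
    rwa [Submodule.orthogonal_orthogonal] at h
  have hzero : ∀ x ∈ L, π x = 0 := by
    intro x hx
    have h : Submodule.orthogonalProjection Lᗮ x = 0 :=
      Submodule.orthogonalProjectionOnto_apply_of_mem_orthogonal
        (L.le_orthogonal_orthogonal hx)
    exact congrArg Subtype.val h
  have hsubL : ∀ x y, (π x = π y) → x - y ∈ L := by
    intro x y h
    have h2 : x - y = (x - π x) - (y - π y) := by rw [h]; abel
    rw [h2]
    exact Submodule.sub_mem L (hsub x) (hsub y)
  have hsubdist : ∀ x y : EuclideanSpace ℝ (Fin n), π x - π y = π (x - y) := by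
    intro x y
    simp only [hπ, map_sub, Submodule.coe_sub]
  have hLπ : ∀ x y, x - y ∈ L → π x = π y := by
    intro x y h
    have h1 : π (x - y) = 0 := hzero _ h
    rw [← hsubdist] at h1
    rwa [sub_eq_zero] at h1
  have hid : ∀ y ∈ Lᗮ, π y = y := fun y hy => Submodule.starProjection_eq_self_iff.mpr hy
  have hmemperp : ∀ x, π x ∈ Lᗮ := fun x => (Submodule.orthogonalProjection Lᗮ x).2
  have hlip : ∀ x y, dist (π x) (π y) ≤ dist x y := by
    intro x y
    rw [dist_eq_norm, dist_eq_norm, hsubdist]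
    calc ‖π (x - y)‖ = ‖Submodule.orthogonalProjection Lᗮ (x - y)‖ := rfl
      _ ≤ ‖Submodule.orthogonalProjection Lᗮ‖ * ‖x - y‖ :=
          (Submodule.orthogonalProjection Lᗮ).le_opNorm _
      _ ≤ 1 * ‖x - y‖ :=
          mul_le_mul_of_nonneg_right (Submodule.orthogonalProjectionOnto_norm_le _) (norm_nonneg _)
      _ = ‖x - y‖ := one_mul _
  have hcont : Continuous π := by
    have : π = fun x => Lᗮ.subtypeL.comp (Submodule.orthogonalProjection Lᗮ) x := rfl
    rw [this]
    exact (Lᗮ.subtypeL.comp (Submodule.orthogonalProjection Lᗮ)).continuous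
  have hSperp : π '' F ⊆ (Lᗮ : Set (EuclideanSpace ℝ (Fin n))) := by
    rintro s ⟨x, _, rfl⟩; exact hmemperp x
  constructor
  · -- first iff
    constructor
    · -- no asymptote → projection closed
      intro hno
      rw [← closure_eq_iff_isClosed]
      refine Set.Subset.antisymm ?_ subset_closure
      intro y hy
      by_contra hyS
      have hyperp : y ∈ Lᗮ := by
        have h := closure_minimal hSperp Lᗮ.closed_of_finiteDimensional
        exact h hy
      apply hno y
      refine ⟨⟨y, AffineSubspace.self_mem_mk' y L⟩, ?_, ?_⟩
      · ext f
        simp only [Set.mem_inter_iff, Set.mem_empty_iff_false, iff_false, not_and]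
        intro hf hfM
        rw [SetLike.mem_coe, AffineSubspace.mem_mk', vsub_eq_sub] at hfM
        have h : π f = π y := hLπ f y hfM
        rw [hid y hyperp] at h
        exact hyS ⟨f, hf, h⟩
      · intro ε hε
        rw [Metric.mem_closure_iff] at hy
        obtain ⟨s, hs, hds⟩ := hy ε hε
        obtain ⟨f, hf, rfl⟩ := hs
        refine ⟨f, hf, y + (f - π f), ?_, ?_⟩
        · rw [SetLike.mem_coe, AffineSubspace.mem_mk', vsub_eq_sub]
          have h : y + (f - π f) - y = f - π f := by abel
          rw [h]; exact hsub f
        · have h : f - (y + (f - π f)) = π f - y := by abel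
          rw [dist_eq_norm, h, ← dist_eq_norm]
          rwa [dist_comm] at hds
    · -- projection closed → no asymptote
      intro hScl v hA
      obtain ⟨-, hdisj, hd⟩ := hA
      have hvS : π v ∈ π '' F := by
        rw [← hScl.closure_eq, Metric.mem_closure_iff]
        intro ε hε
        obtain ⟨x, hx, m, hm, hxm⟩ := hd ε hε
        refine ⟨π x, ⟨x, hx, rfl⟩, ?_⟩
        rw [SetLike.mem_coe, AffineSubspace.mem_mk', vsub_eq_sub] at hm
        have h : π m = π v := hLπ m v hm
        calc dist (π v) (π x) = dist (π m) (π x) := by rw [h]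
          _ ≤ dist m x := hlip m x
          _ = dist x m := dist_comm m x
          _ < ε := hxm
      obtain ⟨f, hf, hfv⟩ := hvS
      have hfvL : f - v ∈ L := hsubL f v hfv
      have hmem : f ∈ F ∩ (AffineSubspace.mk' v L : Set (EuclideanSpace ℝ (Fin n))) := by
        refine ⟨hf, ?_⟩
        rw [SetLike.mem_coe, AffineSubspace.mem_mk', vsub_eq_sub]
        exact hfvL
      rw [hdisj] at hmem
      exact hmem
  · -- second iff
    have hpre : F + (L : Set (EuclideanSpace ℝ (Fin n))) = π ⁻¹' (π '' F) := by
      ext x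
      constructor
      · rintro ⟨f, hf, l, hl, rfl⟩
        have h : π (f + l) = π f := hLπ (f + l) f (by simpa using hl)
        exact ⟨f, hf, h.symm⟩
      · rintro ⟨f, hf, hfx⟩
        refine ⟨f, hf, x - f, ?_, by show _ + (_ - _) = _; abel⟩
        have h := hsubL x f hfx.symm
        simpa using h
    constructor
    · intro hScl
      rw [hpre]
      exact hScl.preimage hcont
    · intro hsum
      have hSeq : π '' F = (F + (L : Set (EuclideanSpace ℝ (Fin n)))) ∩
          (Lᗮ : Set (EuclideanSpace ℝ (Fin n))) := by
        ext y
        constructor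
        · rintro ⟨f, hf, rfl⟩
          refine ⟨⟨f, hf, π f - f, ?_, by show _ + (_ - _) = _; abel⟩, hmemperp f⟩
          have h := Submodule.neg_mem L (hsub f)
          simpa using h
        · rintro ⟨⟨f, hf, l, hl, rfl⟩, hyperp⟩
          refine ⟨f, hf, ?_⟩
          have h1 : π (f + l) = π f := hLπ (f + l) f (by simpa using hl)
          rw [← h1, hid _ hyperp]
      rw [hSeq]
      exact hsum.inter Lᗮ.closed_of_finiteDimensional
end
end

section
/- Let D be a polyhedral convex cone with xᵀGx ≥ 0 for all x ∈ D, where G is symmetric. Then the domain of f(c) = inf_{x∈D} (cᵀx + ½xᵀGx) equals {c : cᵀx ≥ 0 for every x ∈ D with xᵀGx = 0}, and this domain is a polyhedral convex cone. -/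
open Matrix

noncomputable section

/-- A polyhedral (finitely generated) convex cone. -/
def IsPolyhedralCone {E : Type*} [AddCommGroup E] [Module ℝ E] (D : Set E) : Prop :=
  ∃ (m : ℕ) (v : Fin m → E),
    D = {x | ∃ c : Fin m → ℝ, (∀ i, 0 ≤ c i) ∧ x = ∑ i, c i • v i}

namespace PolyAux

variable {E : Type*} [AddCommGroup E] [Module ℝ E]

/-- The convex cone generated by a finite family. -/
def coneSet {ι : Type*} [Fintype ι] (v : ι → E) : Set E :=
  {x | ∃ c : ι → ℝ, (∀ i, 0 ≤ c i) ∧ x = ∑ i, c i • v i}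

variable {ι κ : Type*} [Fintype ι] [Fintype κ]

lemma coneSet_reindex (e : κ ≃ ι) (v : ι → E) : coneSet (v ∘ e) = coneSet v := by
  ext x
  constructor
  · rintro ⟨c, hc, rfl⟩
    refine ⟨c ∘ e.symm, fun i => hc _, ?_⟩
    rw [← Equiv.sum_comp e (fun i => (c ∘ e.symm) i • v i)]
    simp
  · rintro ⟨c, hc, rfl⟩
    refine ⟨c ∘ e, fun i => hc _, ?_⟩
    rw [← Equiv.sum_comp e (fun i => c i • v i)]
    rfl

lemma isPolyhedralCone_coneSet (v : ι → E) : IsPolyhedralCone (coneSet v) := by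
  refine ⟨Fintype.card ι, v ∘ (Fintype.equivFin ι).symm, ?_⟩
  rw [show {x | ∃ c : Fin (Fintype.card ι) → ℝ, (∀ i, 0 ≤ c i) ∧
      x = ∑ i, c i • (v ∘ (Fintype.equivFin ι).symm) i}
    = coneSet (v ∘ (Fintype.equivFin ι).symm) from rfl]
  rw [coneSet_reindex (Fintype.equivFin ι).symm v]

lemma isPolyhedralCone_iff {S : Set E} :
    IsPolyhedralCone S ↔ ∃ (m : ℕ) (v : Fin m → E), S = coneSet v := Iff.rfl

lemma zero_mem_coneSet (v : ι → E) : (0 : E) ∈ coneSet v :=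
  ⟨0, fun _ => le_refl _, by simp⟩

lemma generator_mem_coneSet (v : ι → E) [DecidableEq ι] (i : ι) : v i ∈ coneSet v := by
  refine ⟨fun j => if j = i then 1 else 0, fun j => by positivity, ?_⟩
  simp [ite_smul]

lemma add_mem_coneSet {v : ι → E} {x y : E} (hx : x ∈ coneSet v) (hy : y ∈ coneSet v) :
    x + y ∈ coneSet v := by
  obtain ⟨c, hc, rfl⟩ := hx
  obtain ⟨c', hc', rfl⟩ := hy
  exact ⟨c + c', fun i => add_nonneg (hc i) (hc' i), by simp [add_smul, Finset.sum_add_distrib]⟩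

lemma smul_mem_coneSet {v : ι → E} {x : E} {a : ℝ} (ha : 0 ≤ a) (hx : x ∈ coneSet v) :
    a • x ∈ coneSet v := by
  obtain ⟨c, hc, rfl⟩ := hx
  exact ⟨a • c, fun i => mul_nonneg ha (hc i), by
    rw [Finset.smul_sum]; simp [smul_smul]⟩

lemma coneSet_subset {v : ι → E} {S : Set E} (h0 : (0:E) ∈ S)
    (hadd : ∀ x ∈ S, ∀ y ∈ S, x + y ∈ S)
    (hsmul : ∀ (a : ℝ), 0 ≤ a → ∀ x ∈ S, a • x ∈ S)
    (hv : ∀ i, v i ∈ S) : coneSet v ⊆ S := by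
  rintro x ⟨c, hc, rfl⟩
  refine Finset.sum_induction _ (· ∈ S) (fun a b ha hb => hadd a ha b hb) h0 ?_
  exact fun i _ => hsmul (c i) (hc i) (v i) (hv i)

open scoped Classical

lemma caratheodory_cone (v : ι → E) :
    ∀ (s : Finset ι) (c : ι → ℝ), (∀ i, 0 ≤ c i) →
    ∃ s' : Finset ι, s' ⊆ s ∧ LinearIndependent ℝ (fun i : s' => v i) ∧
      ∃ c' : ι → ℝ, (∀ i, 0 ≤ c' i) ∧ ∑ i ∈ s', c' i • v i = ∑ i ∈ s, c i • v i := by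
  intro s
  induction s using Finset.strongInduction with
  | _ s ih =>
  intro c hc
  by_cases hli : LinearIndependent ℝ (fun i : s => v i)
  · exact ⟨s, subset_rfl, hli, c, hc, rfl⟩
  · obtain ⟨g, hg0, j, hgj⟩ := Fintype.not_linearIndependent_iff.1 hli
    -- build a relation vector supported on s with a positive entry
    have key : ∃ dd : ι → ℝ, (∑ i ∈ s, dd i • v i = 0) ∧ (∃ i ∈ s, 0 < dd i) ∧
        (∀ i ∉ s, dd i = 0) := by
      set d : ι → ℝ := fun i => if h : i ∈ s then g ⟨i, h⟩ else 0 with hd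
      have hsum : ∑ i ∈ s, d i • v i = 0 := by
        rw [← Finset.sum_coe_sort s (fun i => d i • v i)]
        rw [← hg0]
        refine Finset.sum_congr rfl fun i _ => ?_
        simp [hd, i.2]
      have hdj : d (j : ι) ≠ 0 := by simp [hd, j.2, hgj]
      by_cases hpos : ∃ i ∈ s, 0 < d i
      · exact ⟨d, hsum, hpos, fun i hi => by simp [hd, hi]⟩
      · refine ⟨-d, ?_, ⟨j, j.2, ?_⟩, fun i hi => by simp [hd, hi]⟩
        · simp only [Pi.neg_apply, neg_smul, Finset.sum_neg_distrib, hsum, neg_zero]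
        · push_neg at hpos
          have h4 := hpos j j.2
          simp only [Pi.neg_apply]
          rcases lt_or_eq_of_le h4 with h | h
          · linarith
          · exact absurd h hdj
    obtain ⟨dd, hdsum, ⟨i1, hi1s, hi1⟩, hdd0⟩ := key
    have hfilne : (s.filter (fun i => 0 < dd i)).Nonempty := ⟨i1, Finset.mem_filter.2 ⟨hi1s, hi1⟩⟩
    set lam : ℝ := (s.filter (fun i => 0 < dd i)).inf' hfilne (fun i => c i / dd i) with hlam
    have hlam0 : 0 ≤ lam := by
      apply Finset.le_inf'
      intro i hi
      exact div_nonneg (hc i) (le_of_lt (Finset.mem_filter.1 hi).2)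
    obtain ⟨i0, hi0mem, hi0⟩ := Finset.exists_mem_eq_inf' hfilne (fun i => c i / dd i)
    obtain ⟨hi0s, hi0pos⟩ := Finset.mem_filter.1 hi0mem
    set c' : ι → ℝ := fun i => c i - lam * dd i with hc'
    have hc'0 : ∀ i, 0 ≤ c' i := by
      intro i
      by_cases his : i ∈ s
      · by_cases hdi : 0 < dd i
        · have : lam ≤ c i / dd i := Finset.inf'_le _ (Finset.mem_filter.2 ⟨his, hdi⟩)
          rw [le_div_iff₀ hdi] at this
          simp only [hc']; linarith
        · push_neg at hdi
          have h3 : 0 ≤ lam * -dd i := mul_nonneg hlam0 (by linarith)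
          have h5 := hc i
          simp only [hc']; nlinarith
      · simp only [hc', hdd0 i his, mul_zero, sub_zero]; exact hc i
    have hlam2 : lam = c i0 / dd i0 := by rw [hlam, hi0]
    have hc'i0 : c' i0 = 0 := by
      simp only [hc', hlam2]
      field_simp
      ring
    have hsum' : ∑ i ∈ s, c' i • v i = ∑ i ∈ s, c i • v i := by
      simp only [hc', sub_smul, Finset.sum_sub_distrib]
      have h2 : ∑ i ∈ s, (lam * dd i) • v i = lam • ∑ i ∈ s, dd i • v i := by
        rw [Finset.smul_sum]
        exact Finset.sum_congr rfl fun i _ => (smul_smul lam (dd i) (v i)).symm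
      rw [h2, hdsum, smul_zero, sub_zero]
    have herase : s.erase i0 ⊂ s := Finset.erase_ssubset hi0s
    obtain ⟨s', hs'sub, hs'li, c'', hc''0, hc''sum⟩ := ih (s.erase i0) herase c' hc'0
    refine ⟨s', hs'sub.trans (Finset.erase_subset _ _), hs'li, c'', hc''0, ?_⟩
    rw [hc''sum, Finset.sum_erase s (show c' i0 • v i0 = 0 by rw [hc'i0, zero_smul]), hsum']

variable {d : ℕ}

/-- the linear map sending coefficients to the combination -/
def combMap (w : κ → (Fin d → ℝ)) : (κ → ℝ) →ₗ[ℝ] (Fin d → ℝ) where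
  toFun c := ∑ i, c i • w i
  map_add' c c' := by simp [add_smul, Finset.sum_add_distrib]
  map_smul' a c := by
    simp only [Pi.smul_apply, smul_eq_mul, RingHom.id_apply, Finset.smul_sum, ← smul_smul]

lemma isClosed_orthant : IsClosed {c : κ → ℝ | ∀ i, 0 ≤ c i} := by
  have : {c : κ → ℝ | ∀ i, 0 ≤ c i} = ⋂ i, {c : κ → ℝ | 0 ≤ c i} := by
    ext c; simp
  rw [this]
  exact isClosed_iInter fun i => isClosed_le continuous_const (continuous_apply i)

lemma isClosed_coneSet (v : ι → (Fin d → ℝ)) : IsClosed (coneSet v) := by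
  have main : coneSet v = ⋃ (σ : {s : Finset ι // LinearIndependent ℝ (fun i : s => v i)}),
      (combMap (fun i : (σ : Finset ι) => v i)) '' {c | ∀ i, 0 ≤ c i} := by
    ext x
    constructor
    · rintro ⟨c, hc, rfl⟩
      obtain ⟨s', hsub, hli, c', hc'0, hc'sum⟩ :=
        caratheodory_cone v Finset.univ c hc
      refine Set.mem_iUnion.2 ⟨⟨s', hli⟩, ⟨fun i => c' i, fun i => hc'0 i, ?_⟩⟩
      show ∑ i : s', c' (i : ι) • v (i : ι) = _
      rw [Finset.sum_coe_sort s' (fun i => c' i • v i), hc'sum]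
    · intro hx
      obtain ⟨σ, cc, hcc0, rfl⟩ := Set.mem_iUnion.1 hx
      classical
      refine ⟨fun i => if h : i ∈ (σ : Finset ι) then cc ⟨i, h⟩ else 0,
        fun i => ?_, ?_⟩
      · by_cases h : i ∈ (σ : Finset ι) <;> simp only [dif_pos, dif_neg, h, le_refl]
        · exact hcc0 ⟨i, h⟩
        · exact le_refl 0
      · show _ = ∑ i : ι, (if h : i ∈ (σ : Finset ι) then cc ⟨i, h⟩ else 0) • v i
        rw [← Finset.sum_subset (Finset.subset_univ (σ : Finset ι))
          (fun i _ hi => by rw [dif_neg hi, zero_smul])]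
        rw [← Finset.sum_coe_sort (σ : Finset ι)
          (fun i => (if h : i ∈ (σ : Finset ι) then cc ⟨i, h⟩ else 0) • v i)]
        show ∑ i : (σ : Finset ι), cc i • v i = _
        refine Finset.sum_congr rfl fun i _ => ?_
        rw [dif_pos i.2]
  rw [main]
  refine isClosed_iUnion_of_finite fun σ => ?_
  have hker : LinearMap.ker (combMap (fun i : (σ : Finset ι) => v i)) = ⊥ := by
    rw [LinearMap.ker_eq_bot']
    intro c hc
    have := Fintype.linearIndependent_iff.1 σ.2 c hc
    funext i
    exact this i
  exact ((combMap _).isClosedEmbedding_of_injective hker).isClosedMap _ isClosed_orthant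

/-- finite intersection of halfspaces through 0 -/
def HSet (a : ι → (Fin d → ℝ)) : Set (Fin d → ℝ) := {x | ∀ i, 0 ≤ a i ⬝ᵥ x}

/-- dual cone w.r.t. dot product -/
def dualSet (A : Set (Fin d → ℝ)) : Set (Fin d → ℝ) := {x | ∀ y ∈ A, 0 ≤ y ⬝ᵥ x}

lemma dotProduct_sum_smul (c : ι → ℝ) (w : ι → (Fin d → ℝ)) (x : Fin d → ℝ) :
    (∑ i, c i • w i) ⬝ᵥ x = ∑ i, c i * (w i ⬝ᵥ x) := by
  simp only [dotProduct, Finset.sum_apply, Pi.smul_apply, smul_eq_mul, Finset.sum_mul,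
    Finset.mul_sum]
  rw [Finset.sum_comm]
  exact Finset.sum_congr rfl fun i _ => Finset.sum_congr rfl fun j _ => by ring

lemma dualSet_coneSet (a : ι → (Fin d → ℝ)) : dualSet (coneSet a) = HSet a := by
  ext x
  constructor
  · intro hx i
    exact hx (a i) (generator_mem_coneSet a i)
  · rintro hx y ⟨c, hc, rfl⟩
    rw [dotProduct_sum_smul]
    exact Finset.sum_nonneg fun i _ => mul_nonneg (hc i) (hx i)

lemma inner_eq_dot (z y : EuclideanSpace ℝ (Fin d)) :
    (inner ℝ z y : ℝ) = ((EuclideanSpace.equiv (Fin d) ℝ) z) ⬝ᵥ ((EuclideanSpace.equiv (Fin d) ℝ) y) := by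
  rw [PiLp.inner_apply]
  refine Finset.sum_congr rfl fun i _ => ?_
  simp [mul_comm]

lemma farkas (a : ι → (Fin d → ℝ)) : dualSet (HSet a) = coneSet a := by
  ext b
  constructor
  · intro hb
    by_contra hnot
    set e := EuclideanSpace.equiv (Fin d) ℝ with he
    set K : ConvexCone ℝ (EuclideanSpace ℝ (Fin d)) :=
      { carrier := ⇑e ⁻¹' (coneSet a)
        smul_mem' := by
          intro c hc x hx
          show e (c • x) ∈ coneSet a
          rw [_root_.map_smul]
          exact smul_mem_coneSet (le_of_lt hc) hx
        add_mem' := by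
          intro x hx y hy
          show e (x + y) ∈ coneSet a
          rw [map_add]
          exact add_mem_coneSet hx hy } with hK
    have hKne : (K : Set (EuclideanSpace ℝ (Fin d))).Nonempty :=
      ⟨0, show e 0 ∈ coneSet a by rw [map_zero]; exact zero_mem_coneSet a⟩
    have hKcl : IsClosed (K : Set (EuclideanSpace ℝ (Fin d))) :=
      (isClosed_coneSet a).preimage e.continuous
    have hbK : e.symm b ∉ K := by
      intro hmem
      exact hnot (by have h' : e (e.symm b) ∈ coneSet a := hmem; simpa using h')
    obtain ⟨y, hy, hyb⟩ :=
      ProperCone.hyperplane_separation' (⟨K.toPointedCone (ConvexCone.Pointed.of_nonempty_of_isClosed hKne hKcl), hKcl⟩ : ProperCone ℝ (EuclideanSpace ℝ (Fin d))) hbK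
    rw [real_inner_comm] at hyb
    have hyH : e y ∈ HSet a := by
      intro i
      have hmem : e.symm (a i) ∈ K := by
        show e (e.symm (a i)) ∈ coneSet a
        rw [ContinuousLinearEquiv.apply_symm_apply]
        exact generator_mem_coneSet a i
      have h0 := hy (e.symm (a i)) hmem
      rwa [inner_eq_dot, ContinuousLinearEquiv.apply_symm_apply] at h0
    have h1 : 0 ≤ (e y) ⬝ᵥ b := hb (e y) hyH
    have h2 : (inner ℝ y (e.symm b) : ℝ) = (e y) ⬝ᵥ b := by
      rw [inner_eq_dot, ContinuousLinearEquiv.apply_symm_apply]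
    rw [h2] at hyb
    linarith
  · rintro ⟨c, hc, rfl⟩ t ht
    rw [dotProduct_comm, dotProduct_sum_smul]
    exact Finset.sum_nonneg fun i _ => mul_nonneg (hc i) (ht i)

/-- generators for the intersection of a cone with a halfspace -/
def ddFam (v : ι → (Fin d → ℝ)) (u : Fin d → ℝ) : (ι ⊕ ι × ι) → (Fin d → ℝ) :=
  fun k => Sum.elim
    (fun i => if 0 ≤ u ⬝ᵥ v i then v i else 0)
    (fun p => if 0 < u ⬝ᵥ v p.1 ∧ u ⬝ᵥ v p.2 < 0 then
        (u ⬝ᵥ v p.1) • v p.2 + (-(u ⬝ᵥ v p.2)) • v p.1 else 0) k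

lemma dot_sum_smul (u : Fin d → ℝ) (c : ι → ℝ) (w : ι → (Fin d → ℝ)) :
    u ⬝ᵥ (∑ i, c i • w i) = ∑ i, c i * (w i ⬝ᵥ u) := by
  rw [dotProduct_comm, dotProduct_sum_smul]

lemma dd_key (v : ι → (Fin d → ℝ)) (u : Fin d → ℝ) :
    ∀ (N : ℕ) (c : ι → ℝ), (Finset.univ.filter (fun i => c i ≠ 0)).card = N →
      (∀ i, 0 ≤ c i) → 0 ≤ u ⬝ᵥ (∑ i, c i • v i) →
      (∑ i, c i • v i) ∈ coneSet (ddFam v u) := by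
  intro N
  induction N using Nat.strong_induction_on with
  | _ N ih =>
  intro c hcard hc hdot
  by_cases hneg : ∃ j, c j ≠ 0 ∧ u ⬝ᵥ v j < 0
  · obtain ⟨j0, hj0ne, hj0neg⟩ := hneg
    have hj0pos : 0 < c j0 := lt_of_le_of_ne (hc j0) (Ne.symm hj0ne)
    have hpos : ∃ i, c i ≠ 0 ∧ 0 < u ⬝ᵥ v i := by
      by_contra hno
      push_neg at hno
      have hsum : u ⬝ᵥ (∑ i, c i • v i) < 0 := by
        rw [dot_sum_smul]
        have : ∀ i ∈ Finset.univ, c i * (v i ⬝ᵥ u) ≤ (0:ℝ) := by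
          intro i _
          by_cases hci : c i = 0
          · simp [hci]
          · have h1 := hno i hci
            rw [dotProduct_comm]
            exact mul_nonpos_of_nonneg_of_nonpos (hc i)
              (by rcases lt_or_eq_of_le h1 with h | h
                  · exact le_of_lt h
                  · exact le_of_eq h)
        calc ∑ i, c i * (v i ⬝ᵥ u) < ∑ _i : ι, (0:ℝ) := by
              refine Finset.sum_lt_sum this ⟨j0, Finset.mem_univ _, ?_⟩
              rw [dotProduct_comm]
              exact mul_neg_of_pos_of_neg hj0pos hj0neg
          _ = 0 := by simp
      linarith
    obtain ⟨i0, hi0ne, hi0pos⟩ := hpos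
    have hci0 : 0 < c i0 := lt_of_le_of_ne (hc i0) (Ne.symm hi0ne)
    have hij : i0 ≠ j0 := fun h => by rw [h] at hi0pos; linarith
    set α : ℝ := u ⬝ᵥ v i0 with hα
    set β : ℝ := -(u ⬝ᵥ v j0) with hβ
    have hαpos : 0 < α := hi0pos
    have hβpos : 0 < β := by simp only [hβ]; linarith
    set μ : ℝ := min (c i0 / β) (c j0 / α) with hμ
    have hμpos : 0 < μ := lt_min (div_pos hci0 hβpos) (div_pos hj0pos hαpos)
    set c' : ι → ℝ := Function.update (Function.update c i0 (c i0 - μ * β)) j0 (c j0 - μ * α)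
      with hc'
    have hc'i0 : c' i0 = c i0 - μ * β := by
      rw [hc', Function.update_of_ne hij, Function.update_self]
    have hc'j0 : c' j0 = c j0 - μ * α := by rw [hc', Function.update_self]
    have hc'other : ∀ i, i ≠ i0 → i ≠ j0 → c' i = c i := by
      intro i h1 h2
      rw [hc', Function.update_of_ne h2, Function.update_of_ne h1]
    have hc'0 : ∀ i, 0 ≤ c' i := by
      intro i
      by_cases h1 : i = j0
      · subst h1
        rw [hc'j0]
        have : μ ≤ c i / α := min_le_right _ _
        rw [le_div_iff₀ hαpos] at this
        linarith
      · by_cases h2 : i = i0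
        · subst h2
          rw [hc'i0]
          have : μ ≤ c i / β := min_le_left _ _
          rw [le_div_iff₀ hβpos] at this
          linarith
        · rw [hc'other i h2 h1]; exact hc i
    -- the combined generator
    set g : Fin d → ℝ := α • v j0 + β • v i0 with hg
    have hgdot : u ⬝ᵥ g = 0 := by
      rw [hg, dotProduct_add, dotProduct_smul, dotProduct_smul, smul_eq_mul, smul_eq_mul,
        hα, hβ]
      ring
    have hkey : ∑ i, c i • v i = (∑ i, c' i • v i) + μ • g := by
      have hdiff : ∑ i, (c i - c' i) • v i = (μ * β) • v i0 + (μ * α) • v j0 := by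
        rw [← Finset.sum_subset (Finset.subset_univ ({i0, j0} : Finset ι))
          (fun i _ hi => by
            have h1 : i ≠ i0 := fun h => hi (by simp [h])
            have h2 : i ≠ j0 := fun h => hi (by simp [h])
            rw [hc'other i h1 h2, sub_self, zero_smul])]
        rw [Finset.sum_pair hij, hc'i0, hc'j0]
        congr 1 <;> ring_nf
      have hsub : ∑ i, c i • v i - ∑ i, c' i • v i = ∑ i, (c i - c' i) • v i := by
        rw [← Finset.sum_sub_distrib]
        exact Finset.sum_congr rfl fun i _ => (sub_smul (c i) (c' i) (v i)).symm
      have h7 : ∑ i, c i • v i = ∑ i, c' i • v i + ((μ * β) • v i0 + (μ * α) • v j0) := by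
        rw [← hdiff, ← hsub]; abel
      rw [h7, hg, smul_add, smul_smul, smul_smul]
      abel
    have hc'dot : 0 ≤ u ⬝ᵥ (∑ i, c' i • v i) := by
      have : u ⬝ᵥ (∑ i, c i • v i) = u ⬝ᵥ (∑ i, c' i • v i) + μ * (u ⬝ᵥ g) := by
        rw [hkey, dotProduct_add, dotProduct_smul, smul_eq_mul]
      rw [hgdot, mul_zero, add_zero] at this
      linarith [hdot, this.symm.le, this.le]
    -- the filter strictly decreased
    have hzero : c' i0 = 0 ∨ c' j0 = 0 := by
      rcases min_choice (c i0 / β) (c j0 / α) with h | h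
      · left; rw [hc'i0, hμ, h]; field_simp; ring
      · right; rw [hc'j0, hμ, h]; field_simp; ring
    have hsubset : (Finset.univ.filter (fun i => c' i ≠ 0)) ⊂
        (Finset.univ.filter (fun i => c i ≠ 0)) := by
      constructor
      · intro i hi
        rw [Finset.mem_filter] at hi ⊢
        refine ⟨Finset.mem_univ _, ?_⟩
        intro h0
        apply hi.2
        by_cases h1 : i = i0
        · subst h1; rw [hc'i0, h0]; exfalso; exact hi0ne h0
        · by_cases h2 : i = j0
          · subst h2; exfalso; exact hj0ne h0
          · rw [hc'other i h1 h2]; exact h0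
      · intro hsub
        rcases hzero with h | h
        · have := hsub (Finset.mem_filter.2 ⟨Finset.mem_univ _, hi0ne⟩)
          rw [Finset.mem_filter] at this
          exact this.2 h
        · have := hsub (Finset.mem_filter.2 ⟨Finset.mem_univ _, hj0ne⟩)
          rw [Finset.mem_filter] at this
          exact this.2 h
    have hlt : (Finset.univ.filter (fun i => c' i ≠ 0)).card < N := by
      rw [← hcard]
      exact Finset.card_lt_card hsubset
    have hrec := ih _ hlt c' rfl hc'0 hc'dot
    rw [hkey]
    refine add_mem_coneSet hrec (smul_mem_coneSet (le_of_lt hμpos) ?_)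
    have : g = ddFam v u (Sum.inr (i0, j0)) := by
      rw [ddFam]
      simp only [Sum.elim_inr]
      rw [if_pos ⟨hi0pos, hj0neg⟩, hg, hα, hβ]
    rw [this]
    exact generator_mem_coneSet _ _
  · push_neg at hneg
    refine ⟨fun k => Sum.elim (fun i => c i) (fun _ => 0) k, fun k => ?_, ?_⟩
    · cases k with
      | inl i => exact hc i
      | inr p => exact le_refl 0
    · rw [Fintype.sum_sum_type]
      simp only [Sum.elim_inl, Sum.elim_inr, zero_smul, Finset.sum_const_zero, add_zero]
      refine Finset.sum_congr rfl fun i _ => ?_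
      rw [ddFam]
      simp only [Sum.elim_inl]
      by_cases h : 0 ≤ u ⬝ᵥ v i
      · rw [if_pos h]
      · rw [if_neg h]
        push_neg at h
        by_cases hci : c i = 0
        · rw [hci, zero_smul, zero_smul]
        · exact absurd h (not_lt.2 (le_of_not_gt (fun hlt => hci (by
            exact False.elim (hci (by
              have := hneg i hci
              linarith))))))

lemma coneSet_inter_halfspace (v : ι → (Fin d → ℝ)) (u : Fin d → ℝ) :
    coneSet v ∩ {x | 0 ≤ u ⬝ᵥ x} = coneSet (ddFam v u) := by
  apply Set.Subset.antisymm
  · rintro x ⟨⟨c, hc, rfl⟩, hx⟩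
    exact dd_key v u _ c rfl hc hx
  · apply coneSet_subset
    · exact ⟨zero_mem_coneSet v, by simp⟩
    · rintro x ⟨hx1, hx2⟩ y ⟨hy1, hy2⟩
      exact ⟨add_mem_coneSet hx1 hy1, by
        simp only [Set.mem_setOf_eq, dotProduct_add] at *
        linarith⟩
    · rintro a ha x ⟨hx1, hx2⟩
      exact ⟨smul_mem_coneSet ha hx1, by
        simp only [Set.mem_setOf_eq, dotProduct_smul, smul_eq_mul] at *
        exact mul_nonneg ha hx2⟩
    · intro k
      cases k with
      | inl i =>
        rw [ddFam]
        simp only [Sum.elim_inl]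
        by_cases h : 0 ≤ u ⬝ᵥ v i
        · rw [if_pos h]
          exact ⟨generator_mem_coneSet v i, h⟩
        · rw [if_neg h]
          exact ⟨zero_mem_coneSet v, by simp⟩
      | inr p =>
        rw [ddFam]
        simp only [Sum.elim_inr]
        by_cases h : 0 < u ⬝ᵥ v p.1 ∧ u ⬝ᵥ v p.2 < 0
        · rw [if_pos h]
          refine ⟨add_mem_coneSet (smul_mem_coneSet (le_of_lt h.1) (generator_mem_coneSet v p.2))
            (smul_mem_coneSet (by linarith [h.2]) (generator_mem_coneSet v p.1)), ?_⟩
          show 0 ≤ u ⬝ᵥ _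
          rw [dotProduct_add, dotProduct_smul, dotProduct_smul, smul_eq_mul, smul_eq_mul]
          nlinarith [h.1, h.2]
        · rw [if_neg h]
          exact ⟨zero_mem_coneSet v, by simp⟩

lemma sum_single_smul (x : Fin d → ℝ) : ∑ i, x i • (Pi.single i (1:ℝ) : Fin d → ℝ) = x := by
  funext j
  rw [Finset.sum_apply]
  rw [Finset.sum_eq_single j]
  · simp
  · intro i _ hij
    simp [Pi.single_apply, hij]
  · intro h
    exact absurd (Finset.mem_univ j) h

lemma univ_eq_coneSet :
    (Set.univ : Set (Fin d → ℝ)) = coneSet (fun k : Fin d ⊕ Fin d =>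
      Sum.elim (fun i => (Pi.single i (1:ℝ) : Fin d → ℝ))
        (fun i => -(Pi.single i (1:ℝ) : Fin d → ℝ)) k) := by
  apply Set.Subset.antisymm
  · intro x _
    refine ⟨fun k => Sum.elim (fun i => max (x i) 0) (fun i => max (-(x i)) 0) k,
      fun k => ?_, ?_⟩
    · cases k <;> simp [le_max_right]
    · rw [Fintype.sum_sum_type]
      simp only [Sum.elim_inl, Sum.elim_inr]
      have : ∀ i, max (x i) 0 • (Pi.single i (1:ℝ) : Fin d → ℝ)
            + max (-(x i)) 0 • (-(Pi.single i (1:ℝ) : Fin d → ℝ))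
          = x i • (Pi.single i (1:ℝ) : Fin d → ℝ) := by
        intro i
        rw [smul_neg, ← sub_eq_add_neg, ← sub_smul]
        congr 1
        rcases le_or_gt 0 (x i) with h | h
        · rw [max_eq_left h, max_eq_right (by linarith), sub_zero]
        · rw [max_eq_right (le_of_lt h), max_eq_left (by linarith), zero_sub, neg_neg]
      rw [← Finset.sum_add_distrib]
      rw [Finset.sum_congr rfl (fun i _ => this i)]
      rw [sum_single_smul]
  · exact fun x _ => Set.mem_univ x

lemma HSet_reindex (e : κ ≃ ι) (a : ι → (Fin d → ℝ)) : HSet (a ∘ e) = HSet a := by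
  ext x
  exact ⟨fun h i => by simpa using h (e.symm i), fun h k => h (e k)⟩

/-- every H-cone is finitely generated -/
lemma HSet_fg : ∀ (k : ℕ) (a : Fin k → (Fin d → ℝ)),
    ∃ (m : ℕ) (w : Fin m → (Fin d → ℝ)), HSet a = coneSet w := by
  intro k
  induction k with
  | zero =>
    intro a
    have h1 : HSet a = (Set.univ : Set (Fin d → ℝ)) := by
      ext x
      constructor
      · intro _; trivial
      · intro _ i; exact i.elim0
    rw [h1, univ_eq_coneSet]
    set w := fun k : Fin d ⊕ Fin d =>
      Sum.elim (fun i => (Pi.single i (1:ℝ) : Fin d → ℝ))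
        (fun i => -(Pi.single i (1:ℝ) : Fin d → ℝ)) k with hw
    obtain ⟨m, v, hv⟩ := isPolyhedralCone_coneSet w
    exact ⟨m, v, hv⟩
  | succ k ih =>
    intro a
    obtain ⟨m, w, hw⟩ := ih (a ∘ Fin.castSucc)
    have h1 : HSet a = coneSet w ∩ {x | 0 ≤ a (Fin.last k) ⬝ᵥ x} := by
      rw [← hw]
      ext x
      constructor
      · exact fun h => ⟨fun i => h _, h _⟩
      · rintro ⟨h1, h2⟩ i
        rcases Fin.eq_castSucc_or_eq_last i with ⟨j, rfl⟩ | rfl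
        · exact h1 j
        · exact h2
    rw [h1, coneSet_inter_halfspace]
    obtain ⟨m', v', hv'⟩ := isPolyhedralCone_coneSet (ddFam w (a (Fin.last k)))
    exact ⟨m', v', hv'⟩

lemma HSet_fg' (a : ι → (Fin d → ℝ)) :
    ∃ (m : ℕ) (w : Fin m → (Fin d → ℝ)), HSet a = coneSet w := by
  rw [← HSet_reindex (Fintype.equivFin ι).symm a]
  exact HSet_fg _ _

/-- every finitely generated cone is an H-cone -/
lemma coneSet_eq_HSet (v : ι → (Fin d → ℝ)) :
    ∃ (m : ℕ) (w : Fin m → (Fin d → ℝ)), coneSet v = HSet w := by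
  obtain ⟨m, w, hw⟩ := HSet_fg' v
  refine ⟨m, w, ?_⟩
  rw [← farkas v, hw, dualSet_coneSet]

section FW

lemma dot_mulVec_symm {m : ℕ} {H : Matrix (Fin m) (Fin m) ℝ} (hH : H.IsSymm)
    (x y : Fin m → ℝ) : x ⬝ᵥ H *ᵥ y = y ⬝ᵥ H *ᵥ x := by
  rw [dotProduct_mulVec, ← Matrix.mulVec_transpose, hH.eq, dotProduct_comm]

lemma copos_zero {m : ℕ} {H : Matrix (Fin m) (Fin m) ℝ} (hH : H.IsSymm)
    (hcop : ∀ t : Fin m → ℝ, (∀ i, 0 ≤ t i) → 0 ≤ t ⬝ᵥ H *ᵥ t)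
    {y : Fin m → ℝ} (hy : ∀ i, 0 ≤ y i) (hz : y ⬝ᵥ H *ᵥ y = 0)
    {s : Fin m → ℝ} (hs : ∀ i, 0 ≤ s i) : 0 ≤ y ⬝ᵥ H *ᵥ s := by
  by_contra hcon
  push_neg at hcon
  set a : ℝ := y ⬝ᵥ H *ᵥ s with ha
  set cc : ℝ := s ⬝ᵥ H *ᵥ s with hcc
  have hcc0 : 0 ≤ cc := hcop s hs
  set ε : ℝ := -a / (cc + 1) with hε
  have hεpos : 0 < ε := div_pos (by linarith) (by linarith)
  have hexp : (y + ε • s) ⬝ᵥ H *ᵥ (y + ε • s) = 2 * ε * a + ε ^ 2 * cc := by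
    rw [Matrix.mulVec_add, Matrix.mulVec_smul, dotProduct_add, add_dotProduct,
      add_dotProduct, dotProduct_smul, smul_dotProduct, smul_dotProduct,
      dotProduct_smul, dot_mulVec_symm hH s y]
    simp only [smul_eq_mul]
    rw [hz, ← ha, ← hcc]
    ring
  have hge : 0 ≤ (y + ε • s) ⬝ᵥ H *ᵥ (y + ε • s) :=
    hcop _ (fun i => by
      have := hs i
      have := hy i
      simp only [Pi.add_apply, Pi.smul_apply, smul_eq_mul]
      nlinarith)
  rw [hexp] at hge
  have hεc : ε * (cc + 1) = -a := by
    rw [hε]; field_simp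
  nlinarith [mul_pos hεpos hεpos]

lemma copos_zero_mulVec {m : ℕ} {H : Matrix (Fin m) (Fin m) ℝ} (hH : H.IsSymm)
    (hcop : ∀ t : Fin m → ℝ, (∀ i, 0 ≤ t i) → 0 ≤ t ⬝ᵥ H *ᵥ t)
    {y : Fin m → ℝ} (hy : ∀ i, 0 ≤ y i) (hz : y ⬝ᵥ H *ᵥ y = 0) (i : Fin m) :
    0 ≤ (H *ᵥ y) i := by
  have h1 : 0 ≤ y ⬝ᵥ H *ᵥ (Pi.single i 1) :=
    copos_zero hH hcop hy hz (fun j => by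
      classical
      by_cases h : j = i <;> simp [Pi.single_apply, h])
  have h2 : y ⬝ᵥ H *ᵥ (Pi.single i 1) = (H *ᵥ y) i := by
    rw [dot_mulVec_symm hH]
    rw [single_dotProduct, one_mul]
  rw [← h2]
  exact h1

end FW

lemma frank_wolfe : ∀ (m : ℕ) (H : Matrix (Fin m) (Fin m) ℝ), H.IsSymm →
    ∀ b : Fin m → ℝ,
    (∀ t : Fin m → ℝ, (∀ i, 0 ≤ t i) → 0 ≤ t ⬝ᵥ H *ᵥ t) →
    (∀ t : Fin m → ℝ, (∀ i, 0 ≤ t i) → t ⬝ᵥ H *ᵥ t = 0 → 0 ≤ b ⬝ᵥ t) →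
    ∃ B : ℝ, ∀ t : Fin m → ℝ, (∀ i, 0 ≤ t i) →
      B ≤ b ⬝ᵥ t + (1/2) * (t ⬝ᵥ H *ᵥ t) := by
  intro m
  induction m with
  | zero =>
    intro H _ b _ _
    refine ⟨0, fun t _ => ?_⟩
    have h1 : b ⬝ᵥ t = 0 := by simp [dotProduct]
    have h2 : t ⬝ᵥ H *ᵥ t = 0 := by simp [dotProduct]
    rw [h1, h2]; norm_num
  | succ m ih =>
    intro H hHs b hcop hzero
    have contq : Continuous fun y : Fin (m+1) → ℝ => y ⬝ᵥ H *ᵥ y := by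
      show Continuous fun y : Fin (m+1) → ℝ => ∑ i, y i * ∑ j, H i j * y j
      exact continuous_finset_sum _ fun i _ => (continuous_apply i).mul
        (continuous_finset_sum _ fun j _ => continuous_const.mul (continuous_apply j))
    have contb : Continuous fun y : Fin (m+1) → ℝ => b ⬝ᵥ y := by
      show Continuous fun y : Fin (m+1) → ℝ => ∑ i, b i * y i
      exact continuous_finset_sum _ fun i _ => continuous_const.mul (continuous_apply i)
    have hSne : (stdSimplex ℝ (Fin (m+1))).Nonempty := by
      refine ⟨Pi.single 0 1, fun j => ?_, ?_⟩
      · classical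
        by_cases h : j = 0 <;> simp [Pi.single_apply, h]
      · classical
        simp [Pi.single_apply]
    by_cases hZ : ∃ y, (∀ i, 0 ≤ y i) ∧ (∑ i, y i = 1) ∧ y ⬝ᵥ H *ᵥ y = 0
    · -- there is a zero of the quadratic form on the simplex: use the face reduction
      obtain ⟨y0, hy00, hy0s, hy0q⟩ := hZ
      have hb0 : 0 ≤ b ⬝ᵥ y0 := hzero y0 hy00 hy0q
      have hHy0 : ∀ i, 0 ≤ (H *ᵥ y0) i := fun i => copos_zero_mulVec hHs hcop hy00 hy0q i
      have hex : ∃ i1, 0 < y0 i1 := by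
        by_contra hno
        push_neg at hno
        have : ∀ i ∈ Finset.univ, y0 i = 0 := fun i _ => le_antisymm (hno i) (hy00 i)
        rw [Finset.sum_congr rfl this] at hy0s
        simp at hy0s
      obtain ⟨i1, hi1⟩ := hex
      -- lower bounds on each face via the induction hypothesis
      have hface : ∀ i : Fin (m+1), ∃ Bi : ℝ, ∀ t : Fin (m+1) → ℝ,
          (∀ j, 0 ≤ t j) → t i = 0 → Bi ≤ b ⬝ᵥ t + (1/2) * (t ⬝ᵥ H *ᵥ t) := by
        intro i
        set H' : Matrix (Fin m) (Fin m) ℝ := H.submatrix i.succAbove i.succAbove with hH'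
        set b' : Fin m → ℝ := b ∘ i.succAbove with hb'
        have hH's : H'.IsSymm := by
          rw [Matrix.IsSymm]
          ext j k
          simp only [hH', Matrix.transpose_apply, Matrix.submatrix_apply]
          exact hHs.apply _ _
        have hins0 : ∀ u : Fin m → ℝ, (∀ j, 0 ≤ u j) → ∀ k, 0 ≤ Fin.insertNth (α := fun _ => ℝ) i 0 u k := by
          intro u hu k
          refine Fin.succAboveCases i ?_ ?_ k
          · rw [Fin.insertNth_apply_same]
          · intro j
            rw [Fin.insertNth_apply_succAbove]
            exact hu j
        have hinsdot : ∀ u : Fin m → ℝ, b ⬝ᵥ Fin.insertNth (α := fun _ => ℝ) i 0 u = b' ⬝ᵥ u := by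
          intro u
          show ∑ k, b k * Fin.insertNth (α := fun _ => ℝ) i 0 u k = _
          rw [Fin.sum_univ_succAbove (fun k => b k * Fin.insertNth (α := fun _ => ℝ) i 0 u k) i]
          simp only [Fin.insertNth_apply_same, mul_zero, zero_add,
            Fin.insertNth_apply_succAbove]
          rfl
        have hinsmul : ∀ u : Fin m → ℝ, ∀ j : Fin m,
            (H *ᵥ Fin.insertNth (α := fun _ => ℝ) i 0 u) (i.succAbove j) = (H' *ᵥ u) j := by
          intro u j
          show ∑ k, H (i.succAbove j) k * Fin.insertNth (α := fun _ => ℝ) i 0 u k = _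
          rw [Fin.sum_univ_succAbove (fun k => H (i.succAbove j) k * Fin.insertNth (α := fun _ => ℝ) i 0 u k) i]
          simp only [Fin.insertNth_apply_same, mul_zero, zero_add,
            Fin.insertNth_apply_succAbove]
          rfl
        have hinsquad : ∀ u : Fin m → ℝ,
            (Fin.insertNth (α := fun _ => ℝ) i 0 u) ⬝ᵥ H *ᵥ (Fin.insertNth (α := fun _ => ℝ) i 0 u) = u ⬝ᵥ H' *ᵥ u := by
          intro u
          show ∑ k, Fin.insertNth (α := fun _ => ℝ) i 0 u k * (H *ᵥ Fin.insertNth (α := fun _ => ℝ) i 0 u) k = _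
          rw [Fin.sum_univ_succAbove
            (fun k => Fin.insertNth (α := fun _ => ℝ) i 0 u k * (H *ᵥ Fin.insertNth (α := fun _ => ℝ) i 0 u) k) i]
          simp only [Fin.insertNth_apply_same, zero_mul, zero_add,
            Fin.insertNth_apply_succAbove]
          exact Finset.sum_congr rfl fun j _ => by rw [hinsmul u j]
        obtain ⟨Bi, hBi⟩ := ih H' hH's b'
          (fun u hu => by rw [← hinsquad u]; exact hcop _ (hins0 u hu))
          (fun u hu hq => by
            rw [← hinsdot u]
            exact hzero _ (hins0 u hu) (by rw [hinsquad u]; exact hq))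
        refine ⟨Bi, fun t ht hti => ?_⟩
        have hrepr : Fin.insertNth (α := fun _ => ℝ) i 0 (t ∘ i.succAbove) = t := by
          funext k
          refine Fin.succAboveCases i ?_ ?_ k
          · rw [Fin.insertNth_apply_same, hti]
          · intro j
            rw [Fin.insertNth_apply_succAbove]
            rfl
        have := hBi (t ∘ i.succAbove) (fun j => ht _)
        rw [← hinsdot, ← hinsquad, hrepr] at this
        exact this
      choose Bv hBv using hface
      have hne : (Finset.univ : Finset (Fin (m+1))).Nonempty := ⟨i1, Finset.mem_univ _⟩
      refine ⟨Finset.univ.inf' hne Bv, fun t ht => ?_⟩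
      -- subtract the right multiple of y0 to land on a face
      have hfilne : (Finset.univ.filter (fun i => 0 < y0 i)).Nonempty :=
        ⟨i1, Finset.mem_filter.2 ⟨Finset.mem_univ _, hi1⟩⟩
      set lam : ℝ := (Finset.univ.filter (fun i => 0 < y0 i)).inf' hfilne
        (fun i => t i / y0 i) with hlam
      have hlam0 : 0 ≤ lam :=
        Finset.le_inf' _ _ fun i hi => div_nonneg (ht i) (le_of_lt (Finset.mem_filter.1 hi).2)
      set t' : Fin (m+1) → ℝ := t - lam • y0 with ht'
      have ht'0 : ∀ i, 0 ≤ t' i := by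
        intro i
        simp only [ht', Pi.sub_apply, Pi.smul_apply, smul_eq_mul]
        by_cases h : 0 < y0 i
        · have hle : lam ≤ t i / y0 i := by
            rw [hlam]
            exact Finset.inf'_le _ (Finset.mem_filter.2 ⟨Finset.mem_univ i, h⟩)
          rw [le_div_iff₀ h] at hle
          linarith
        · have h0 : y0 i = 0 := le_antisymm (not_lt.1 h) (hy00 i)
          rw [h0, mul_zero, sub_zero]
          exact ht i
      obtain ⟨i0, hi0mem, hi0⟩ := Finset.exists_mem_eq_inf' hfilne (fun i => t i / y0 i)
      have hi0pos : 0 < y0 i0 := (Finset.mem_filter.1 hi0mem).2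
      have ht'i0 : t' i0 = 0 := by
        simp only [ht', Pi.sub_apply, Pi.smul_apply, smul_eq_mul, hlam, hi0]
        field_simp
        ring
      -- the value decreases when subtracting lam • y0
      have hq' : b ⬝ᵥ t' + (1/2) * (t' ⬝ᵥ H *ᵥ t') ≤ b ⬝ᵥ t + (1/2) * (t ⬝ᵥ H *ᵥ t) := by
        have e1 : b ⬝ᵥ t' = b ⬝ᵥ t - lam * (b ⬝ᵥ y0) := by
          rw [ht', dotProduct_sub, dotProduct_smul, smul_eq_mul]
        have e2 : t' ⬝ᵥ H *ᵥ t' = t ⬝ᵥ H *ᵥ t - 2 * lam * (t ⬝ᵥ H *ᵥ y0)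
            + lam^2 * (y0 ⬝ᵥ H *ᵥ y0) := by
          rw [ht', Matrix.mulVec_sub, Matrix.mulVec_smul, dotProduct_sub, sub_dotProduct,
            sub_dotProduct, dotProduct_smul, smul_dotProduct, smul_dotProduct,
            dotProduct_smul, dot_mulVec_symm hHs y0 t]
          simp only [smul_eq_mul]
          ring
        have e3 : 0 ≤ t ⬝ᵥ H *ᵥ y0 := by
          show 0 ≤ ∑ i, t i * (H *ᵥ y0) i
          exact Finset.sum_nonneg fun i _ => mul_nonneg (ht i) (hHy0 i)
        rw [e1, e2, hy0q]
        nlinarith [mul_nonneg hlam0 hb0, mul_nonneg hlam0 e3]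
      calc Finset.univ.inf' hne Bv ≤ Bv i0 := Finset.inf'_le _ (Finset.mem_univ _)
        _ ≤ b ⬝ᵥ t' + (1/2) * (t' ⬝ᵥ H *ᵥ t') := hBv i0 t' ht'0 ht'i0
        _ ≤ _ := hq'
    · -- the quadratic form is positive on the simplex; compactness gives the bound
      push_neg at hZ
      obtain ⟨y1, hy1S, hy1min⟩ := (isCompact_stdSimplex ℝ (Fin (m+1))).exists_isMinOn hSne
        contq.continuousOn
      obtain ⟨y2, hy2S, hy2min⟩ := (isCompact_stdSimplex ℝ (Fin (m+1))).exists_isMinOn hSne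
        contb.continuousOn
      set δ : ℝ := y1 ⬝ᵥ H *ᵥ y1 with hδ
      set μ : ℝ := b ⬝ᵥ y2 with hμ
      have hδpos : 0 < δ := by
        rcases lt_or_eq_of_le (hcop y1 hy1S.1) with h | h
        · exact h
        · exact absurd h.symm (hZ y1 hy1S.1 hy1S.2)
      refine ⟨-(μ * μ) / (2 * δ), fun t ht => ?_⟩
      set s : ℝ := ∑ i, t i with hs
      have hs0 : 0 ≤ s := Finset.sum_nonneg fun i _ => ht i
      rcases eq_or_lt_of_le hs0 with hszero | hspos
      · -- t = 0
        have hteq : ∀ i, t i = 0 := by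
          intro i
          have := (Finset.sum_eq_zero_iff_of_nonneg (fun j _ => ht j)).1 hszero.symm
          exact this i (Finset.mem_univ _)
        have h1 : b ⬝ᵥ t = 0 := by
          show ∑ i, b i * t i = 0
          exact Finset.sum_eq_zero fun i _ => by rw [hteq i, mul_zero]
        have h2 : t ⬝ᵥ H *ᵥ t = 0 := by
          show ∑ i, t i * (H *ᵥ t) i = 0
          exact Finset.sum_eq_zero fun i _ => by rw [hteq i, zero_mul]
        rw [h1, h2, neg_div]
        have : 0 ≤ (μ * μ) / (2 * δ) := div_nonneg (mul_self_nonneg μ) (by linarith)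
        linarith
      · set y : Fin (m+1) → ℝ := s⁻¹ • t with hy
        have hyS : y ∈ stdSimplex ℝ (Fin (m+1)) := by
          constructor
          · intro i
            simp only [hy, Pi.smul_apply, smul_eq_mul]
            exact mul_nonneg (inv_nonneg.2 hs0) (ht i)
          · simp only [hy, Pi.smul_apply, smul_eq_mul]
            rw [← Finset.mul_sum, ← hs, inv_mul_cancel₀ (ne_of_gt hspos)]
        have hts : t = s • y := by
          rw [hy, smul_smul, mul_inv_cancel₀ (ne_of_gt hspos), one_smul]
        have hbt : b ⬝ᵥ t = s * (b ⬝ᵥ y) := by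
          rw [hts, dotProduct_smul, smul_eq_mul]
        have hqt : t ⬝ᵥ H *ᵥ t = s^2 * (y ⬝ᵥ H *ᵥ y) := by
          rw [hts, Matrix.mulVec_smul, dotProduct_smul, smul_dotProduct]
          simp only [smul_eq_mul]
          ring
        have hby : μ ≤ b ⬝ᵥ y := isMinOn_iff.1 hy2min y hyS
        have hqy : δ ≤ y ⬝ᵥ H *ᵥ y := isMinOn_iff.1 hy1min y hyS
        rw [hbt, hqt, neg_div]
        have key : 0 ≤ s * μ + (1/2) * (s^2 * δ) + (μ * μ) / (2 * δ) := by
          have hexp : s * μ + (1/2) * (s^2 * δ) + (μ * μ) / (2 * δ)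
              = (s * δ + μ)^2 / (2 * δ) := by
            field_simp
            ring
          rw [hexp]
          positivity
        have h5 : s * μ ≤ s * (b ⬝ᵥ y) := by
          exact mul_le_mul_of_nonneg_left hby hs0
        have h6 : (1/2) * (s^2 * δ) ≤ (1/2) * (s^2 * (y ⬝ᵥ H *ᵥ y)) := by
          have := mul_le_mul_of_nonneg_left hqy (sq_nonneg s)
          nlinarith
        linarith

end PolyAux

open PolyAux

theorem domain_of_quadratic_inf_on_polyhedral_cone {n : ℕ}
    (D : Set (Fin n → ℝ)) (hD : IsPolyhedralCone D)
    (G : Matrix (Fin n) (Fin n) ℝ) (hG : G.IsSymm)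
    (hpos : ∀ x ∈ D, 0 ≤ x ⬝ᵥ G.mulVec x) :
    {c : Fin n → ℝ |
        BddBelow ((fun x => c ⬝ᵥ x + (1 / 2) * (x ⬝ᵥ G.mulVec x)) '' D)} =
      {c : Fin n → ℝ | ∀ x ∈ D, x ⬝ᵥ G.mulVec x = 0 → 0 ≤ c ⬝ᵥ x} ∧
    IsPolyhedralCone
      {c : Fin n → ℝ |
        BddBelow ((fun x => c ⬝ᵥ x + (1 / 2) * (x ⬝ᵥ G.mulVec x)) '' D)} := by
  obtain ⟨m, v, hDeq⟩ := isPolyhedralCone_iff.1 hD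
  -- parameter-space data
  set Vmap : (Fin m → ℝ) → (Fin n → ℝ) := fun t => ∑ i, t i • v i with hVmap
  set Hm : Matrix (Fin m) (Fin m) ℝ := fun i j => v i ⬝ᵥ G *ᵥ v j with hHm
  set bvec : (Fin n → ℝ) → (Fin m → ℝ) := fun c i => c ⬝ᵥ v i with hbvec
  have hmemD : ∀ x, x ∈ D ↔ ∃ t : Fin m → ℝ, (∀ i, 0 ≤ t i) ∧ x = Vmap t := by
    intro x; rw [hDeq]; exact Iff.rfl
  have hdotV : ∀ (c : Fin n → ℝ) (t : Fin m → ℝ), c ⬝ᵥ Vmap t = bvec c ⬝ᵥ t := by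
    intro c t
    rw [hVmap, dot_sum_smul]
    refine Finset.sum_congr rfl fun i _ => ?_
    rw [hbvec, dotProduct_comm]
    ring
  have hGV : ∀ t : Fin m → ℝ, G *ᵥ Vmap t = ∑ j, t j • (G *ᵥ v j) := by
    intro t
    rw [hVmap]
    show G.mulVecLin _ = _
    rw [map_sum]
    exact Finset.sum_congr rfl fun j _ => by rw [_root_.map_smul, Matrix.mulVecLin_apply]
  have hquadV : ∀ t : Fin m → ℝ, Vmap t ⬝ᵥ G *ᵥ Vmap t = t ⬝ᵥ Hm *ᵥ t := by
    intro t
    rw [hGV t, hVmap, dotProduct_sum_smul]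
    show _ = ∑ i, t i * (Hm *ᵥ t) i
    refine Finset.sum_congr rfl fun i _ => ?_
    congr 1
    rw [dot_sum_smul]
    show _ = ∑ j, Hm i j * t j
    refine Finset.sum_congr rfl fun j _ => ?_
    rw [hHm, dotProduct_comm]
    ring
  have hHmS : Hm.IsSymm := by
    rw [Matrix.IsSymm]
    ext i j
    rw [Matrix.transpose_apply, hHm]
    exact dot_mulVec_symm hG (v j) (v i)
  have hcop : ∀ t : Fin m → ℝ, (∀ i, 0 ≤ t i) → 0 ≤ t ⬝ᵥ Hm *ᵥ t := by
    intro t ht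
    rw [← hquadV t]
    exact hpos _ ((hmemD _).2 ⟨t, ht, rfl⟩)
  -- the target right-hand set
  set W : Set (Fin n → ℝ) := {c | ∀ x ∈ D, x ⬝ᵥ G.mulVec x = 0 → 0 ≤ c ⬝ᵥ x} with hW
  have hWiff : ∀ c, c ∈ W ↔ ∀ t : Fin m → ℝ, (∀ i, 0 ≤ t i) → t ⬝ᵥ Hm *ᵥ t = 0 →
      0 ≤ bvec c ⬝ᵥ t := by
    intro c
    constructor
    · intro hc t ht htq
      rw [← hdotV]
      exact hc (Vmap t) ((hmemD _).2 ⟨t, ht, rfl⟩) (by rw [hquadV]; exact htq)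
    · intro hc x hx hxq
      obtain ⟨t, ht, rfl⟩ := (hmemD x).1 hx
      rw [hdotV]
      exact hc t ht (by rw [← hquadV]; exact hxq)
  -- Part A : the two sets are equal
  have hEq : {c : Fin n → ℝ |
      BddBelow ((fun x => c ⬝ᵥ x + (1 / 2) * (x ⬝ᵥ G.mulVec x)) '' D)} = W := by
    ext c
    simp only [Set.mem_setOf_eq]
    constructor
    · -- easy direction
      rintro ⟨B, hB⟩ x hx hxq
      by_contra hneg
      push_neg at hneg
      set k : ℝ := max 0 ((B - 1) / (c ⬝ᵥ x)) with hk
      have hk0 : 0 ≤ k := le_max_left _ _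
      have hkx : k • x ∈ D := by
        obtain ⟨t, ht, rfl⟩ := (hmemD x).1 hx
        refine (hmemD _).2 ⟨k • t, fun i => mul_nonneg hk0 (ht i), ?_⟩
        rw [hVmap, Finset.smul_sum]
        exact Finset.sum_congr rfl fun i _ => by
          simp [smul_smul]
      have hval := hB (Set.mem_image_of_mem _ hkx)
      have hq2 : (k • x) ⬝ᵥ G *ᵥ (k • x) = 0 := by
        rw [Matrix.mulVec_smul, dotProduct_smul, smul_dotProduct]
        simp only [smul_eq_mul]
        rw [hxq]
        ring
      have hlin : c ⬝ᵥ (k • x) = k * (c ⬝ᵥ x) := by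
        rw [dotProduct_smul, smul_eq_mul]
      rw [hlin, hq2] at hval
      have hkge : (B - 1) / (c ⬝ᵥ x) ≤ k := le_max_right _ _
      have : k * (c ⬝ᵥ x) ≤ (B - 1) / (c ⬝ᵥ x) * (c ⬝ᵥ x) :=
        mul_le_mul_of_nonpos_right hkge (le_of_lt hneg)
      rw [div_mul_cancel₀ _ (ne_of_lt hneg)] at this
      linarith
    · -- hard direction : Frank-Wolfe
      intro hc
      obtain ⟨B, hB⟩ := frank_wolfe m Hm hHmS (bvec c) hcop ((hWiff c).1 hc)
      refine ⟨B, ?_⟩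
      rintro y ⟨x, hx, rfl⟩
      obtain ⟨t, ht, rfl⟩ := (hmemD x).1 hx
      have := hB t ht
      rw [← hdotV, ← hquadV] at this
      exact this
  refine ⟨hEq, ?_⟩
  rw [hEq]
  -- Part B : polyhedrality of W
  -- the zero set of the quadratic form decomposes into finitely many H-cones
  classical
  set fam : Finset (Fin m) → (Fin m ⊕ Fin m ⊕ Fin m ⊕ Fin m) → (Fin m → ℝ) := fun S k =>
    Sum.elim (fun i => (Pi.single i (1:ℝ) : Fin m → ℝ))
      (Sum.elim (fun i => (fun j => Hm i j))
        (Sum.elim (fun i => if i ∈ S then -(Pi.single i (1:ℝ) : Fin m → ℝ) else 0)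
          (fun i => if i ∈ S then 0 else -(fun j => Hm i j)))) k with hfam
  have hrow : ∀ (i : Fin m) (t : Fin m → ℝ), (fun j => Hm i j) ⬝ᵥ t = (Hm *ᵥ t) i := by
    intro i t; rfl
  have hZdec : {t : Fin m → ℝ | (∀ i, 0 ≤ t i) ∧ t ⬝ᵥ Hm *ᵥ t = 0} =
      ⋃ S : Finset (Fin m), HSet (fam S) := by
    ext t
    simp only [Set.mem_setOf_eq, Set.mem_iUnion]
    constructor
    · rintro ⟨ht, htq⟩
      have hHt : ∀ i, 0 ≤ (Hm *ᵥ t) i := fun i => copos_zero_mulVec hHmS hcop ht htq i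
      have hprod : ∀ i, t i * (Hm *ᵥ t) i = 0 := by
        have hsum : ∑ i, t i * (Hm *ᵥ t) i = 0 := htq
        intro i
        exact (Finset.sum_eq_zero_iff_of_nonneg
          (fun j _ => mul_nonneg (ht j) (hHt j))).1 hsum i (Finset.mem_univ _)
      refine ⟨Finset.univ.filter (fun i => t i = 0), ?_⟩
      intro k
      rcases k with i | k
      · simpa [hfam, single_dotProduct] using ht i
      rcases k with i | k
      · simpa [hfam, hrow] using hHt i
      rcases k with i | i
      · simp only [hfam, Sum.elim_inr, Sum.elim_inl]
        by_cases h : i ∈ Finset.univ.filter (fun i => t i = 0)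
        · rw [if_pos h]
          have h0 : t i = 0 := (Finset.mem_filter.1 h).2
          rw [neg_dotProduct, single_dotProduct, one_mul, h0, neg_zero]
        · rw [if_neg h, zero_dotProduct]
      · simp only [hfam, Sum.elim_inr]
        by_cases h : i ∈ Finset.univ.filter (fun i => t i = 0)
        · rw [if_pos h, zero_dotProduct]
        · rw [if_neg h, neg_dotProduct, hrow]
          have hti : t i ≠ 0 := by
            intro h0
            exact h (Finset.mem_filter.2 ⟨Finset.mem_univ _, h0⟩)
          have : (Hm *ᵥ t) i = 0 := by
            rcases mul_eq_zero.1 (hprod i) with h1 | h1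
            · exact absurd h1 hti
            · exact h1
          rw [this, neg_zero]
    · rintro ⟨S, hS⟩
      have ht : ∀ i, 0 ≤ t i := by
        intro i
        have := hS (Sum.inl i)
        simpa [hfam, single_dotProduct] using this
      refine ⟨ht, ?_⟩
      have : ∀ i ∈ Finset.univ, t i * (Hm *ᵥ t) i = 0 := by
        intro i _
        by_cases h : i ∈ S
        · have h1 := hS (Sum.inr (Sum.inr (Sum.inl i)))
          simp only [hfam, Sum.elim_inr, Sum.elim_inl, if_pos h] at h1
          rw [neg_dotProduct, single_dotProduct, one_mul] at h1
          have : t i = 0 := le_antisymm (by linarith) (ht i)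
          rw [this, zero_mul]
        · have h1 := hS (Sum.inr (Sum.inr (Sum.inr i)))
          simp only [hfam, Sum.elim_inr, if_neg h] at h1
          rw [neg_dotProduct, hrow] at h1
          have h2 := hS (Sum.inr (Sum.inl i))
          simp only [hfam, Sum.elim_inr, Sum.elim_inl] at h2
          rw [hrow] at h2
          have : (Hm *ᵥ t) i = 0 := le_antisymm (by linarith) h2
          rw [this, mul_zero]
      show ∑ i, t i * (Hm *ᵥ t) i = 0
      exact Finset.sum_eq_zero this
  -- each dual is finitely generated, hence an H-cone
  have hdual : ∀ S : Finset (Fin m), ∃ (k : ℕ) (g : Fin k → (Fin m → ℝ)),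
      dualSet (HSet (fam S)) = HSet g := by
    intro S
    rw [farkas (fam S)]
    exact coneSet_eq_HSet (fam S)
  choose kk gg hgg using hdual
  set sig : Type := Σ S : Finset (Fin m), Fin (kk S) with hsig
  set gfam : sig → (Fin m → ℝ) := fun p => gg p.1 p.2 with hgfam
  have hWb : ∀ bb : Fin m → ℝ,
      (∀ t : Fin m → ℝ, (∀ i, 0 ≤ t i) → t ⬝ᵥ Hm *ᵥ t = 0 → 0 ≤ bb ⬝ᵥ t) ↔
      (∀ p : sig, 0 ≤ gfam p ⬝ᵥ bb) := by
    intro bb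
    constructor
    · intro h p
      have hmem : bb ∈ HSet (gg p.1) := by
        rw [← hgg p.1]
        intro y hy
        have hyZ : (∀ i, 0 ≤ y i) ∧ y ⬝ᵥ Hm *ᵥ y = 0 := by
          have : y ∈ ⋃ S : Finset (Fin m), HSet (fam S) := Set.mem_iUnion.2 ⟨p.1, hy⟩
          rw [← hZdec] at this
          exact this
        rw [dotProduct_comm]
        exact h y hyZ.1 hyZ.2
      exact hmem p.2
    · intro h t ht htq
      have htZ : t ∈ ⋃ S : Finset (Fin m), HSet (fam S) := by
        rw [← hZdec]; exact ⟨ht, htq⟩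
      obtain ⟨S, hS⟩ := Set.mem_iUnion.1 htZ
      have : bb ∈ HSet (gg S) := fun j => h ⟨S, j⟩
      rw [← hgg S] at this
      rw [dotProduct_comm]
      exact this t hS
  -- pull back to the c-variables
  set wfam : sig → (Fin n → ℝ) := fun p => ∑ i, gfam p i • v i with hwfam
  have hWH : W = HSet wfam := by
    ext c
    rw [show c ∈ W ↔ _ from hWiff c, hWb (bvec c)]
    constructor
    · intro h p
      have := h p
      rw [hwfam]
      show 0 ≤ (∑ i, gfam p i • v i) ⬝ᵥ c
      rw [dotProduct_sum_smul]
      rw [show (0:ℝ) ≤ gfam p ⬝ᵥ bvec c ↔ 0 ≤ ∑ i, gfam p i * (v i ⬝ᵥ c) from ?_] at this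
      · exact this
      · constructor
        · intro hh
          rw [show ∑ i, gfam p i * (v i ⬝ᵥ c) = gfam p ⬝ᵥ bvec c from ?_]
          · exact hh
          · refine Finset.sum_congr rfl fun i _ => ?_
            rw [hbvec, dotProduct_comm]
        · intro hh
          rw [show gfam p ⬝ᵥ bvec c = ∑ i, gfam p i * (v i ⬝ᵥ c) from ?_]
          · exact hh
          · refine Finset.sum_congr rfl fun i _ => ?_
            rw [hbvec, dotProduct_comm]
    · intro h p
      have := h p
      rw [hwfam] at this
      show (0:ℝ) ≤ gfam p ⬝ᵥ bvec c
      rw [show gfam p ⬝ᵥ bvec c = ∑ i, gfam p i * (v i ⬝ᵥ c) from ?_]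
      · rw [← dotProduct_sum_smul]
        exact this
      · refine Finset.sum_congr rfl fun i _ => ?_
        rw [hbvec, dotProduct_comm]
  rw [hWH]
  obtain ⟨m', w', hw'⟩ := HSet_fg' wfam
  rw [hw']
  exact isPolyhedralCone_coneSet w'
end
end

section
/- Let F = K + D with K compact and D a polyhedral closed convex cone in ℝⁿ, and let L be a linear subspace with (K+D) ∩ L ≠ ∅. Then there exists a compact set K₀ such that (K + D) ∩ L = K₀ + (D ∩ L). -/
open Pointwise

set_option synthInstance.maxHeartbeats 400000 in
lemma aux_inj_bound {F G : Type*} [NormedAddCommGroup F] [NormedSpace ℝ F]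
    [NormedAddCommGroup G] [NormedSpace ℝ G] [FiniteDimensional ℝ F]
    (f : F →ₗ[ℝ] G) (hf : Function.Injective f) :
    ∃ C : ℝ, 0 ≤ C ∧ ∀ x, ‖x‖ ≤ C * ‖f x‖ := by
  haveI : FiniteDimensional ℝ (LinearMap.range f) :=
    (LinearEquiv.ofInjective f hf).finiteDimensional
  set e := LinearEquiv.ofInjective f hf with he
  let g : (LinearMap.range f) →L[ℝ] F := LinearMap.toContinuousLinearMap e.symm.toLinearMap
  refine ⟨‖g‖, g.opNorm_nonneg, fun x => ?_⟩
  have h1 : g ⟨f x, LinearMap.mem_range_self f x⟩ = x := by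
    have h2 : e x = ⟨f x, LinearMap.mem_range_self f x⟩ := by
      apply Subtype.ext
      simp [he, LinearEquiv.ofInjective_apply]
    have : g (e x) = x := by
      simp [g]
    rwa [h2] at this
  have hnorm : ‖(⟨f x, LinearMap.mem_range_self f x⟩ : LinearMap.range f)‖ = ‖f x‖ := rfl
  calc ‖x‖ = ‖g ⟨f x, LinearMap.mem_range_self f x⟩‖ := by rw [h1]
  _ ≤ ‖g‖ * ‖(⟨f x, LinearMap.mem_range_self f x⟩ : LinearMap.range f)‖ := g.le_opNorm _
  _ = ‖g‖ * ‖f x‖ := by rw [hnorm]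

lemma aux_subset_bound {m : ℕ} {G : Type*} [NormedAddCommGroup G] [NormedSpace ℝ G]
    (A : (Fin m → ℝ) →ₗ[ℝ] G) (I : Finset (Fin m))
    (hI : ∀ c : Fin m → ℝ, (∀ i ∉ I, c i = 0) → A c = 0 → c = 0) :
    ∃ C : ℝ, 0 ≤ C ∧ ∀ c : Fin m → ℝ, (∀ i ∉ I, c i = 0) → ‖c‖ ≤ C * ‖A c‖ := by
  -- submodule of functions supported in I
  let V : Submodule ℝ (Fin m → ℝ) := Submodule.pi (↑Iᶜ) (fun _ => ⊥)
  have hmemV : ∀ c : Fin m → ℝ, c ∈ V ↔ ∀ i ∉ I, c i = 0 := by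
    intro c
    simp [V, Submodule.mem_pi]
  let f : V →ₗ[ℝ] G := A.comp V.subtype
  have hinj : Function.Injective f := by
    rw [← LinearMap.ker_eq_bot]
    apply LinearMap.ker_eq_bot'.mpr
    rintro ⟨c, hc⟩ hfc
    apply Subtype.ext
    exact hI c ((hmemV c).mp hc) hfc
  obtain ⟨C, hC0, hC⟩ := aux_inj_bound f hinj
  refine ⟨C, hC0, fun c hc => ?_⟩
  have := hC ⟨c, (hmemV c).mpr hc⟩
  simpa [f] using this

lemma aux_uniform_bound {m : ℕ} {G : Type*} [NormedAddCommGroup G] [NormedSpace ℝ G]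
    (A : (Fin m → ℝ) →ₗ[ℝ] G) :
    ∃ C : ℝ, 0 ≤ C ∧ ∀ I : Finset (Fin m),
      (∀ c : Fin m → ℝ, (∀ i ∉ I, c i = 0) → A c = 0 → c = 0) →
      ∀ c : Fin m → ℝ, (∀ i ∉ I, c i = 0) → ‖c‖ ≤ C * ‖A c‖ := by
  have h : ∀ I : Finset (Fin m), ∃ C : ℝ, 0 ≤ C ∧
      ((∀ c : Fin m → ℝ, (∀ i ∉ I, c i = 0) → A c = 0 → c = 0) →
        ∀ c : Fin m → ℝ, (∀ i ∉ I, c i = 0) → ‖c‖ ≤ C * ‖A c‖) := by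
    intro I
    by_cases hI : ∀ c : Fin m → ℝ, (∀ i ∉ I, c i = 0) → A c = 0 → c = 0
    · obtain ⟨C, hC0, hC⟩ := aux_subset_bound A I hI
      exact ⟨C, hC0, fun _ => hC⟩
    · exact ⟨0, le_refl _, fun h' => absurd h' hI⟩
  choose Cf hCf0 hCf using h
  refine ⟨∑ I : Finset (Fin m), Cf I, Finset.sum_nonneg fun I _ => hCf0 I, fun I hI c hc => ?_⟩
  calc ‖c‖ ≤ Cf I * ‖A c‖ := hCf I hI c hc
  _ ≤ (∑ J : Finset (Fin m), Cf J) * ‖A c‖ := by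
      apply mul_le_mul_of_nonneg_right _ (norm_nonneg _)
      exact Finset.single_le_sum (fun J _ => hCf0 J) (Finset.mem_univ I)

lemma aux_reduce {m : ℕ} (c lam : Fin m → ℝ) (hc : ∀ i, 0 ≤ c i)
    (hsupp : ∀ i, c i = 0 → lam i = 0) (hpos : ∃ i, 0 < lam i) :
    ∃ (t : ℝ) (c' : Fin m → ℝ), 0 < t ∧ c = c' + t • lam ∧ (∀ i, 0 ≤ c' i) ∧
      (Finset.univ.filter fun i => c' i ≠ 0).card <
        (Finset.univ.filter fun i => c i ≠ 0).card := by
  classical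
  set T : Finset (Fin m) := Finset.univ.filter (fun i => 0 < lam i) with hT
  have hTne : T.Nonempty := by
    obtain ⟨i, hi⟩ := hpos
    exact ⟨i, by simp [hT, hi]⟩
  set t : ℝ := T.inf' hTne (fun i => c i / lam i) with ht
  have hcpos : ∀ i ∈ T, 0 < c i := by
    intro i hi
    have hlam : 0 < lam i := by simpa [hT] using hi
    rcases (hc i).lt_or_eq with h | h
    · exact h
    · exact absurd (hsupp i h.symm) (ne_of_gt hlam)
  have htpos : 0 < t := by
    rw [ht, Finset.lt_inf'_iff]
    intro i hi
    exact div_pos (hcpos i hi) (by simpa [hT] using hi)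
  have htle : ∀ i ∈ T, t ≤ c i / lam i := fun i hi => Finset.inf'_le _ hi
  obtain ⟨i₀, hi₀T, hi₀⟩ := Finset.exists_mem_eq_inf' hTne (fun i => c i / lam i)
  refine ⟨t, c - t • lam, htpos, by ring_nf, ?_, ?_⟩
  · intro i
    rcases lt_or_ge 0 (lam i) with h | h
    · have hiT : i ∈ T := by simp [hT, h]
      have h2 : t * lam i ≤ c i := by
        have := htle i hiT
        rw [le_div_iff₀ h] at this
        exact this
      simp only [Pi.sub_apply, Pi.smul_apply, smul_eq_mul]
      linarith
    · have : t * lam i ≤ 0 := mul_nonpos_of_nonneg_of_nonpos htpos.le h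
      simp only [Pi.sub_apply, Pi.smul_apply, smul_eq_mul]
      linarith [hc i]
  · apply Finset.card_lt_card
    rw [Finset.ssubset_iff_of_subset]
    · refine ⟨i₀, ?_, ?_⟩
      · simp only [Finset.mem_filter, Finset.mem_univ, true_and]
        exact ne_of_gt (hcpos i₀ hi₀T)
      · simp only [Finset.mem_filter, Finset.mem_univ, true_and, not_not, Pi.sub_apply,
          Pi.smul_apply, smul_eq_mul]
        have hlam₀ : 0 < lam i₀ := by simpa [hT] using hi₀T
        rw [ht, hi₀]
        field_simp
        ring
    · intro i hi
      simp only [Finset.mem_filter, Finset.mem_univ, true_and, Pi.sub_apply, Pi.smul_apply,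
        smul_eq_mul] at hi ⊢
      intro hci
      apply hi
      rw [hci, hsupp i hci]
      ring

lemma aux_decomp {m : ℕ} {G : Type*} [NormedAddCommGroup G] [NormedSpace ℝ G]
    (A : (Fin m → ℝ) →ₗ[ℝ] G) :
    ∃ C : ℝ, 0 ≤ C ∧ ∀ c : Fin m → ℝ, (∀ i, 0 ≤ c i) →
      ∃ c₀ r : Fin m → ℝ, c = c₀ + r ∧ (∀ i, 0 ≤ c₀ i) ∧ (∀ i, 0 ≤ r i) ∧ A r = 0 ∧
        ∀ i, c₀ i ≤ C * ‖A c‖ := by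
  classical
  obtain ⟨C, hC0, hC⟩ := aux_uniform_bound A
  refine ⟨C, hC0, ?_⟩
  suffices h : ∀ N : ℕ, ∀ c : Fin m → ℝ,
      (Finset.univ.filter fun i => c i ≠ 0).card ≤ N → (∀ i, 0 ≤ c i) →
      ∃ c₀ r : Fin m → ℝ, c = c₀ + r ∧ (∀ i, 0 ≤ c₀ i) ∧ (∀ i, 0 ≤ r i) ∧ A r = 0 ∧
        ∀ i, c₀ i ≤ C * ‖A c‖ by
    intro c hc
    exact h _ c le_rfl hc
  intro N
  induction N with
  | zero =>
    intro c hcard hc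
    have hc0 : c = 0 := by
      funext i
      simp only [Pi.zero_apply]
      by_contra hi
      have : i ∈ Finset.univ.filter fun i => c i ≠ 0 := by simp [hi]
      have := Finset.card_pos.mpr ⟨i, this⟩
      omega
    exact ⟨0, 0, by simp [hc0], fun i => le_rfl, fun i => le_rfl, map_zero A,
      fun i => by positivity⟩
  | succ N ih =>
    intro c hcard hc
    set S : Finset (Fin m) := Finset.univ.filter fun i => c i ≠ 0 with hS
    by_cases hIndep : ∀ lam : Fin m → ℝ, (∀ i ∉ S, lam i = 0) → A lam = 0 → lam = 0
    · refine ⟨c, 0, by simp, hc, fun i => le_rfl, map_zero A, fun i => ?_⟩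
      have hsupp : ∀ i ∉ S, c i = 0 := by
        intro i hi
        simpa [hS, not_not] using hi
      calc c i ≤ |c i| := le_abs_self _
      _ = ‖c i‖ := rfl
      _ ≤ ‖c‖ := norm_le_pi_norm c i
      _ ≤ C * ‖A c‖ := hC S hIndep c hsupp
    · push_neg at hIndep
      obtain ⟨lam, hlsupp, hlA, hlne⟩ := hIndep
      have hlsupp' : ∀ i, c i = 0 → lam i = 0 := by
        intro i hi
        exact hlsupp i (by simp [hS, hi])
      -- get a lam with a positive entry
      have key : ∀ mu : Fin m → ℝ, (∀ i, c i = 0 → mu i = 0) → A mu = 0 →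
          (∃ i, 0 < mu i) →
          ∃ c' : Fin m → ℝ, (∃ t : ℝ, 0 < t ∧ c = c' + t • mu) ∧ (∀ i, 0 ≤ c' i) ∧
            A c' = A c ∧
            (Finset.univ.filter fun i => c' i ≠ 0).card ≤ N := by
        intro mu hmsupp hmA hmpos
        obtain ⟨t, c', ht, hct, hc', hcard'⟩ := aux_reduce c mu hc hmsupp hmpos
        refine ⟨c', ⟨t, ht, hct⟩, hc', ?_, ?_⟩
        · rw [hct]
          simp [hmA]
        · have hc2 : (Finset.univ.filter fun i => c i ≠ 0).card ≤ N + 1 := hcard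
          omega
      by_cases hposneg : ∃ i, 0 < lam i
      · obtain ⟨c', ⟨t, ht, hct⟩, hc', hAc', hcard'⟩ := key lam hlsupp' hlA hposneg
        by_cases hneg : ∃ i, lam i < 0
        · -- two-sided case
          have hmpos' : ∃ i, 0 < (-lam) i := by
            obtain ⟨i, hi⟩ := hneg
            exact ⟨i, by simpa using hi⟩
          have hmsupp' : ∀ i, c i = 0 → (-lam) i = 0 := by
            intro i hi; simp [hlsupp' i hi]
          have hmA' : A (-lam) = 0 := by simp [hlA]
          obtain ⟨c'', ⟨s, hs, hcs⟩, hc'', hAc'', hcard''⟩ := key (-lam) hmsupp' hmA' hmpos'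
          -- c = c' + t•lam, c = c'' - s•lam. θ = s/(t+s)
          obtain ⟨c₀', r', hce', hc₀', hr', hAr', hb'⟩ := ih c' hcard' hc'
          obtain ⟨c₀'', r'', hce'', hc₀'', hr'', hAr'', hb''⟩ := ih c'' hcard'' hc''
          obtain ⟨θ, hθ⟩ : ∃ θ : ℝ, θ = s / (t + s) := ⟨_, rfl⟩
          have hts : 0 < t + s := by linarith
          have hθ0 : 0 ≤ θ := by rw [hθ]; positivity
          have hθ1 : θ ≤ 1 := by
            rw [hθ, div_le_one hts]; linarith
          have hconv : c = θ • c' + (1 - θ) • c'' := by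
            have h1 : c' = c - t • lam := by rw [hct]; abel
            have h2 : c'' = c + s • lam := by
              rw [hcs]; simp [smul_smul]
            rw [h1, h2]
            have : θ * t - (1 - θ) * s = 0 := by
              rw [hθ]
              field_simp
              ring
            funext i
            simp only [Pi.add_apply, Pi.smul_apply, Pi.sub_apply, smul_eq_mul]
            linear_combination (lam i) * this
          refine ⟨θ • c₀' + (1 - θ) • c₀'', θ • r' + (1 - θ) • r'', ?_, ?_, ?_, ?_, ?_⟩
          · rw [hconv, hce', hce'']
            module
          · intro i
            simp only [Pi.add_apply, Pi.smul_apply, smul_eq_mul]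
            have := hc₀' i; have := hc₀'' i
            nlinarith
          · intro i
            simp only [Pi.add_apply, Pi.smul_apply, smul_eq_mul]
            have := hr' i; have := hr'' i
            nlinarith
          · simp [map_add, map_smul, hAr', hAr'']
          · intro i
            have h1 := hb' i
            have h2 := hb'' i
            rw [hAc'] at h1
            rw [hAc''] at h2
            simp only [Pi.add_apply, Pi.smul_apply, smul_eq_mul]
            nlinarith
        · -- lam ≥ 0 case: c = c' + t•lam, t•lam ≥ 0 and in ker A
          push_neg at hneg
          obtain ⟨c₀, r, hce, hc₀, hr, hAr, hb⟩ := ih c' hcard' hc'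
          refine ⟨c₀, r + t • lam, ?_, hc₀, ?_, ?_, ?_⟩
          · rw [hct, hce]; abel
          · intro i
            simp only [Pi.add_apply, Pi.smul_apply, smul_eq_mul]
            have := hr i; have := hneg i
            nlinarith
          · simp [map_add, map_smul, hAr, hlA]
          · intro i
            have := hb i
            rwa [hAc'] at this
      · -- all lam i ≤ 0, use -lam
        push_neg at hposneg
        have hmpos' : ∃ i, 0 < (-lam) i := by
          have : ∃ i, lam i ≠ 0 := Function.ne_iff.mp hlne
          obtain ⟨i, hi⟩ := this
          exact ⟨i, by simp; exact lt_of_le_of_ne (hposneg i) hi⟩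
        have hmsupp' : ∀ i, c i = 0 → (-lam) i = 0 := by
          intro i hi; simp [hlsupp' i hi]
        have hmA' : A (-lam) = 0 := by simp [hlA]
        obtain ⟨c', ⟨t, ht, hct⟩, hc', hAc', hcard'⟩ := key (-lam) hmsupp' hmA' hmpos'
        by_cases hneg : ∃ i, 0 < lam i
        · exact absurd hneg (by push_neg; exact hposneg)
        · obtain ⟨c₀, r, hce, hc₀, hr, hAr, hb⟩ := ih c' hcard' hc'
          refine ⟨c₀, r + t • (-lam), ?_, hc₀, ?_, ?_, ?_⟩
          · rw [hct, hce]; abel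
          · intro i
            simp only [Pi.add_apply, Pi.smul_apply, Pi.neg_apply, smul_eq_mul]
            have := hr i; have := hposneg i
            nlinarith
          · simp [map_add, map_smul, hAr, hlA]
          · intro i
            have := hb i
            rwa [hAc'] at this

noncomputable section

def auxPhi {m : ℕ} {E : Type*} [AddCommGroup E] [Module ℝ E] (v : Fin m → E) :
    (Fin m → ℝ) →ₗ[ℝ] E where
  toFun c := ∑ i, c i • v i
  map_add' a b := by
    simp [add_smul, Finset.sum_add_distrib]
  map_smul' t a := by
    simp [smul_smul, Finset.smul_sum]

theorem motzkin_intersection_subspace {n : ℕ}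
    (K D : Set (EuclideanSpace ℝ (Fin n)))
    (hK : IsCompact K) (hD : IsPolyhedralCone D)
    (L : Submodule ℝ (EuclideanSpace ℝ (Fin n)))
    (hne : ((K + D) ∩ (L : Set (EuclideanSpace ℝ (Fin n)))).Nonempty) :
    ∃ K₀ : Set (EuclideanSpace ℝ (Fin n)), IsCompact K₀ ∧
      (K + D) ∩ (L : Set (EuclideanSpace ℝ (Fin n))) =
        K₀ + (D ∩ (L : Set (EuclideanSpace ℝ (Fin n)))) := by
  classical
  obtain ⟨m, v, hDv⟩ := hD
  set φ : (Fin m → ℝ) →ₗ[ℝ] EuclideanSpace ℝ (Fin n) := auxPhi v with hφ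
  have hφapp : ∀ c : Fin m → ℝ, φ c = ∑ i, c i • v i := fun c => rfl
  have hmemD : ∀ c : Fin m → ℝ, (∀ i, 0 ≤ c i) → φ c ∈ D := by
    intro c hc
    rw [hDv]
    exact ⟨c, hc, (hφapp c).symm⟩
  set π : EuclideanSpace ℝ (Fin n) →ₗ[ℝ] EuclideanSpace ℝ (Fin n) :=
    (Lᗮ.subtype.comp (Submodule.orthogonalProjectionOnto Lᗮ).toLinearMap) with hπ
  have hπL : ∀ x : EuclideanSpace ℝ (Fin n), x ∈ L ↔ π x = 0 := by
    intro x
    rw [hπ]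
    simp only [LinearMap.comp_apply, ContinuousLinearMap.coe_coe, Submodule.coe_subtype]
    rw [Submodule.coe_eq_zero, Submodule.orthogonalProjectionOnto_eq_zero_iff,
      Submodule.orthogonal_orthogonal]
  obtain ⟨Cπ, hCπ0, hCπ⟩ : ∃ Cp : ℝ, 0 ≤ Cp ∧
      ∀ x : EuclideanSpace ℝ (Fin n), ‖π x‖ ≤ Cp * ‖x‖ := by
    let π' := LinearMap.toContinuousLinearMap π
    exact ⟨‖π'‖, π'.opNorm_nonneg, fun x => π'.le_opNorm x⟩
  obtain ⟨M, hM0, hM⟩ : ∃ M : ℝ, 0 ≤ M ∧ ∀ k ∈ K, ‖k‖ ≤ M := by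
    obtain ⟨M, hM⟩ := hK.isBounded.exists_norm_le
    exact ⟨max M 0, le_max_right _ _, fun k hk => (hM k hk).trans (le_max_left _ _)⟩
  set A : (Fin m → ℝ) →ₗ[ℝ] EuclideanSpace ℝ (Fin n) := π.comp φ with hA
  obtain ⟨C, hC0, hC⟩ := aux_decomp A
  set C' : ℝ := C * (Cπ * M) with hC'
  set B : Set (Fin m → ℝ) := Set.Icc 0 (fun _ => C') with hB
  have hBc : IsCompact B := isCompact_Icc
  have hφcont : Continuous φ := φ.continuous_of_finiteDimensional
  refine ⟨(K + φ '' B) ∩ (L : Set (EuclideanSpace ℝ (Fin n))), ?_, ?_⟩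
  · exact ((hK.add (hBc.image hφcont)).inter_right
      (Submodule.closed_of_finiteDimensional L))
  · apply Set.Subset.antisymm
    · -- hard direction
      rintro x ⟨hxKD, hxL⟩
      rw [Set.mem_add] at hxKD
      obtain ⟨k, hk, d, hd, hkd⟩ := hxKD
      rw [hDv] at hd
      obtain ⟨c, hc, hdc⟩ := hd
      have hdφ : d = φ c := by rw [hφapp]; exact hdc
      obtain ⟨c₀, r, hcr, hc₀, hr, hAr, hbound⟩ := hC c hc
      have hπx : π x = 0 := (hπL x).mp hxL
      have hAc : A c = - π k := by
        have hx' : k + φ c = x := by rw [← hdφ, hkd]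
        have h2 : π (k + φ c) = π k + A c := map_add π k (φ c)
        have h1 : π k + A c = 0 := by rw [← h2, hx', hπx]
        exact eq_neg_of_add_eq_zero_right h1
      have hnormAc : ‖A c‖ ≤ Cπ * M := by
        rw [hAc, norm_neg]
        exact (hCπ k).trans (mul_le_mul_of_nonneg_left (hM k hk) hCπ0)
      have hc₀B : c₀ ∈ B := by
        rw [hB, Set.mem_Icc]
        constructor
        · intro i; exact hc₀ i
        · intro i
          exact (hbound i).trans (mul_le_mul_of_nonneg_left hnormAc hC0)
      have hAc₀ : A c₀ = A c := by
        rw [hcr, map_add, hAr, add_zero]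
      have hx₀L : k + φ c₀ ∈ L := by
        rw [hπL, map_add]
        have : π (φ c₀) = A c₀ := rfl
        rw [this, hAc₀, hAc]
        abel
      have hφrL : φ r ∈ L := by
        rw [hπL]
        exact hAr
      rw [Set.mem_add]
      refine ⟨k + φ c₀, ⟨Set.add_mem_add hk ⟨c₀, hc₀B, rfl⟩, hx₀L⟩,
        φ r, ⟨hmemD r hr, hφrL⟩, ?_⟩
      rw [add_assoc, ← map_add, ← hcr, ← hdφ, hkd]
    · -- easy direction
      rintro x hx
      rw [Set.mem_add] at hx
      obtain ⟨a, ⟨haKB, haL⟩, b, ⟨hbD, hbL⟩, rfl⟩ := hx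
      rw [Set.mem_add] at haKB
      obtain ⟨k, hk, w, ⟨cB, hcB, rfl⟩, rfl⟩ := haKB
      rw [hDv] at hbD
      obtain ⟨cb, hcb, hbc⟩ := hbD
      have hbφ : b = φ cb := by rw [hφapp]; exact hbc
      constructor
      · rw [Set.mem_add]
        refine ⟨k, hk, φ cB + b, ?_, by abel⟩
        rw [hbφ, ← map_add]
        apply hmemD
        intro i
        have h1 : (0 : Fin m → ℝ) ≤ cB := (Set.mem_Icc.mp hcB).1
        have h2 : (0:ℝ) ≤ cB i := h1 i
        have h3 := hcb i
        simp only [Pi.add_apply]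
        linarith
      · exact L.add_mem haL hbL
end
end
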